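/- arXiv:1207.2758 — 2 statements merged into one kernel-verified Lean document; each statement's English description precedes it below -/
import Mathlib

section
/- Let Λ = Tens_S(V)/(R) be a quadratic algebra and e ∈ S ⊆ Λ an idempotent of degree 0. Then Λ/Λ(1−e)Λ ≅ Tens_{eSe}(eVe)/(π⊗π(R)), where π : V → eVe is v ↦ eve. In particular Λ/Λ(1−e)Λ is again a quadratic algebra. -/
set_option synthInstance.maxHeartbeats 1000000
set_option maxHeartbeats 2000000

/-!
Let `Λ = Tens_S(V)/(R)` be a quadratic algebra over a basic semisimple base `S` (a finite
product of copies of `k`), and `e ∈ S` an idempotent of degree `0`.  Then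
`Λ/Λ(1−e)Λ ≅ Tens_{eSe}(eVe)/(π⊗π(R))`, where `π : V → eVe` is `v ↦ eve`; in particular
`Λ/Λ(1−e)Λ` is again quadratic.  We realise `eSe` as `S/(1−e)` and `eVe` as `V/(1−e)V`
(which for an idempotent `e` are canonically isomorphic to the corners `eSe`, `eVe`), and
`π ⊗ π` as the induced base-change map on tensor algebras.
-/

open TensorProduct

section Setup

variable (S : Type) [CommRing S] (V : Type) [AddCommGroup V] [Module S V]

/-- The inclusion of `V ⊗_S V` as the degree-two component of the tensor algebra. -/
noncomputable def iota2 : (V ⊗[S] V) →ₗ[S] TensorAlgebra S V :=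
  TensorProduct.lift
    (((LinearMap.mul S (TensorAlgebra S V)).comp (TensorAlgebra.ι S)).compl₂
      (TensorAlgebra.ι S))

/-- The relations presenting the quadratic algebra `Λ = Tens_S(V)/(R)`. -/
def qRel (R : Set (V ⊗[S] V)) : TensorAlgebra S V → TensorAlgebra S V → Prop :=
  fun u v => (∃ r ∈ R, u = iota2 S V r) ∧ v = 0

/-- The quadratic algebra `Λ = Tens_S(V)/(R)`. -/
def Lam (R : Set (V ⊗[S] V)) : Type := RingQuot (qRel S V R)

noncomputable instance (R : Set (V ⊗[S] V)) : Ring (Lam S V R) :=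
  inferInstanceAs (Ring (RingQuot (qRel S V R)))

/-- The relations killing the two-sided ideal generated by `1 − e`. -/
def eKill (R : Set (V ⊗[S] V)) (e : S) : Lam S V R → Lam S V R → Prop :=
  fun u v =>
    u = RingQuot.mkRingHom (qRel S V R) (algebraMap S (TensorAlgebra S V) (1 - e)) ∧ v = 0

/-- The quotient algebra `Λ/Λ(1−e)Λ`. -/
def LamMod (R : Set (V ⊗[S] V)) (e : S) : Type := RingQuot (eKill S V R e)

noncomputable instance (R : Set (V ⊗[S] V)) (e : S) : Ring (LamMod S V R e) :=
  inferInstanceAs (Ring (RingQuot (eKill S V R e)))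

/-- The corner base ring `eSe`, realised as `S/(1−e)`. -/
def Sbar (e : S) : Type := S ⧸ Ideal.span {(1 : S) - e}

noncomputable instance (e : S) : CommRing (Sbar S e) :=
  inferInstanceAs (CommRing (S ⧸ Ideal.span {(1 : S) - e}))

/-- The corner bimodule `eVe`, realised as `V/(1−e)V`. -/
def Vbar (e : S) : Type :=
  V ⧸ ((Ideal.span {(1 : S) - e}) • (⊤ : Submodule S V))

noncomputable instance (e : S) : AddCommGroup (Vbar S V e) :=
  inferInstanceAs (AddCommGroup (V ⧸ ((Ideal.span {(1 : S) - e}) • (⊤ : Submodule S V))))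

noncomputable instance (e : S) : Module (Sbar S e) (Vbar S V e) :=
  inferInstanceAs (Module (S ⧸ Ideal.span {(1 : S) - e})
    (V ⧸ ((Ideal.span {(1 : S) - e}) • (⊤ : Submodule S V))))

/-- The tensor algebra `Tens_{eSe}(eVe)` is an `S`-algebra via `S → S/(1−e)`. -/
noncomputable instance (e : S) : Algebra S (TensorAlgebra (Sbar S e) (Vbar S V e)) :=
  RingHom.toAlgebra'
    ((algebraMap (Sbar S e) (TensorAlgebra (Sbar S e) (Vbar S V e))).comp
      (Ideal.Quotient.mk (Ideal.span {(1 : S) - e})))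
    (fun c x => by
      exact Algebra.commutes (R := Sbar S e) (Ideal.Quotient.mk (Ideal.span {(1 : S) - e}) c) x)

/-- The image of `s` in `eSe = S/(1−e)`. -/
def mkS (e : S) (s : S) : Sbar S e := Ideal.Quotient.mk (Ideal.span {(1 : S) - e}) s

/-- The image of `v` under `π : V → eVe = V/(1−e)V`. -/
def mkV (e : S) (v : V) : Vbar S V e := Submodule.Quotient.mk v

/-- The map `π : V → eVe` followed by the canonical inclusion into the tensor algebra. -/
noncomputable def jmap (e : S) : V →ₗ[S] TensorAlgebra (Sbar S e) (Vbar S V e) where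
  toFun v := TensorAlgebra.ι (Sbar S e) (mkV S V e v)
  map_add' v w := by
    show TensorAlgebra.ι (Sbar S e) (mkV S V e (v + w)) =
      TensorAlgebra.ι (Sbar S e) (mkV S V e v) + TensorAlgebra.ι (Sbar S e) (mkV S V e w)
    rw [show mkV S V e (v + w) = mkV S V e v + mkV S V e w from rfl, map_add]
  map_smul' s v := by
    show TensorAlgebra.ι (Sbar S e) (mkV S V e (s • v))
      = s • TensorAlgebra.ι (Sbar S e) (mkV S V e v)
    rw [show mkV S V e (s • v) = mkS S e s • mkV S V e v from rfl, map_smul,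
      Algebra.smul_def, Algebra.smul_def]
    rfl

/-- The base-change homomorphism `π : Tens_S(V) → Tens_{eSe}(eVe)`. -/
noncomputable def Theta (e : S) : TensorAlgebra S V →ₐ[S] TensorAlgebra (Sbar S e) (Vbar S V e) :=
  TensorAlgebra.lift S (jmap S V e)

/-- The relations `π⊗π(R)` in `Tens_{eSe}(eVe)`. -/
def qRelCorner (R : Set (V ⊗[S] V)) (e : S) :
    TensorAlgebra (Sbar S e) (Vbar S V e) → TensorAlgebra (Sbar S e) (Vbar S V e) → Prop :=
  fun u v => (∃ r ∈ R, u = Theta S V e (iota2 S V r)) ∧ v = 0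

/-- The quadratic algebra `Tens_{eSe}(eVe)/(π⊗π(R))`. -/
def LamCorner (R : Set (V ⊗[S] V)) (e : S) : Type := RingQuot (qRelCorner S V R e)

noncomputable instance (R : Set (V ⊗[S] V)) (e : S) : Ring (LamCorner S V R e) :=
  inferInstanceAs (Ring (RingQuot (qRelCorner S V R e)))

end Setup


section Proof

variable (S : Type) [CommRing S] (V : Type) [AddCommGroup V] [Module S V]
variable (R : Set (V ⊗[S] V)) (e : S)

noncomputable instance : Algebra S (Lam S V R) :=
  inferInstanceAs (Algebra S (RingQuot (qRel S V R)))

noncomputable instance : Algebra S (LamMod S V R e) :=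
  inferInstanceAs (Algebra S (RingQuot (eKill S V R e)))

/-- The canonical projection `Tens_S(V) → Λ/Λ(1−e)Λ`. -/
noncomputable def pMap : TensorAlgebra S V →+* LamMod S V R e :=
  (RingQuot.mkRingHom (eKill S V R e)).comp (RingQuot.mkRingHom (qRel S V R))

lemma mkRingHom_algebraMap {A : Type} [Ring A] [Algebra S A] (r : A → A → Prop) (s : S) :
    RingQuot.mkRingHom r (algebraMap S _ s) = algebraMap S (RingQuot r) s := by
  rw [← RingQuot.mkAlgHom_coe S r]
  exact (RingQuot.mkAlgHom S r).commutes s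

lemma pMap_algebraMap (s : S) :
    pMap S V R e (algebraMap S _ s) = algebraMap S (LamMod S V R e) s := by
  show RingQuot.mkRingHom (eKill S V R e) (RingQuot.mkRingHom (qRel S V R) (algebraMap S _ s))
      = _
  rw [mkRingHom_algebraMap]
  exact mkRingHom_algebraMap S (eKill S V R e) s

lemma pMap_one_sub_e : pMap S V R e (algebraMap S _ (1 - e)) = 0 := by
  show RingQuot.mkRingHom (eKill S V R e) (RingQuot.mkRingHom (qRel S V R) (algebraMap S _ (1 - e))) = 0
  have h : eKill S V R e
      (RingQuot.mkRingHom (qRel S V R) (algebraMap S (TensorAlgebra S V) (1 - e))) 0 := ⟨rfl, rfl⟩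
  have := RingQuot.mkRingHom_rel h
  rw [this, map_zero]

lemma algebraMap_mem_zero : ∀ s ∈ Ideal.span {(1 : S) - e},
    algebraMap S (LamMod S V R e) s = 0 := by
  intro s hs
  rcases Ideal.mem_span_singleton'.mp hs with ⟨c, rfl⟩
  rw [map_mul, ← pMap_algebraMap S V R e (1 - e), pMap_one_sub_e, mul_zero]

/-- The induced map `eSe = S/(1−e) → Λ/Λ(1−e)Λ`. -/
noncomputable def sBarMap : Sbar S e →+* LamMod S V R e :=
  Ideal.Quotient.lift _ (algebraMap S (LamMod S V R e)) (algebraMap_mem_zero S V R e)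

lemma sBarMap_mk (s : S) :
    sBarMap S V R e (mkS S e s) = algebraMap S (LamMod S V R e) s := rfl

noncomputable instance : Algebra (Sbar S e) (LamMod S V R e) :=
  RingHom.toAlgebra' (sBarMap S V R e) (by
    intro c x
    obtain ⟨s, rfl⟩ := Ideal.Quotient.mk_surjective c
    show sBarMap S V R e (mkS S e s) * x = x * sBarMap S V R e (mkS S e s)
    rw [sBarMap_mk]
    exact Algebra.commutes s x)

/-- `V → Λ/Λ(1−e)Λ`, `v ↦ [ι v]`, as an `S`-linear map. -/
noncomputable def f0 : V →ₗ[S] LamMod S V R e where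
  toFun v := pMap S V R e (TensorAlgebra.ι S v)
  map_add' v w := by
    show pMap S V R e (TensorAlgebra.ι S (v + w))
      = pMap S V R e (TensorAlgebra.ι S v) + pMap S V R e (TensorAlgebra.ι S w)
    rw [map_add, map_add]
  map_smul' s v := by
    show pMap S V R e (TensorAlgebra.ι S (s • v)) = s • pMap S V R e (TensorAlgebra.ι S v)
    rw [map_smul, Algebra.smul_def, map_mul, pMap_algebraMap, Algebra.smul_def]

lemma f0_ker : (Ideal.span {(1 : S) - e} • (⊤ : Submodule S V)) ≤ LinearMap.ker (f0 S V R e) := by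
  refine Submodule.smul_le.mpr fun r hr v _ => ?_
  rw [LinearMap.mem_ker, map_smul, Algebra.smul_def, algebraMap_mem_zero S V R e r hr, zero_mul]

/-- The induced `eSe`-linear map `eVe → Λ/Λ(1−e)Λ`. -/
noncomputable def fbar : Vbar S V e →ₗ[Sbar S e] LamMod S V R e where
  toFun := Submodule.liftQ _ (f0 S V R e) (f0_ker S V R e)
  map_add' x y := map_add _ x y
  map_smul' c x := by
    obtain ⟨s, rfl⟩ := Ideal.Quotient.mk_surjective c
    obtain ⟨v, rfl⟩ := Submodule.Quotient.mk_surjective _ x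
    show Submodule.liftQ _ (f0 S V R e) (f0_ker S V R e)
        (Submodule.Quotient.mk (s • v)) =
      mkS S e s • Submodule.liftQ _ (f0 S V R e) (f0_ker S V R e) (Submodule.Quotient.mk v)
    rw [Submodule.liftQ_apply, Submodule.liftQ_apply, map_smul]
    show s • f0 S V R e v = sBarMap S V R e (mkS S e s) * f0 S V R e v
    rw [sBarMap_mk, Algebra.smul_def]

lemma fbar_mk (v : V) : fbar S V R e (mkV S V e v) = pMap S V R e (TensorAlgebra.ι S v) := rfl

/-- The induced algebra map `Tens_{eSe}(eVe) → Λ/Λ(1−e)Λ`. -/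
noncomputable def ThetaBar :
    TensorAlgebra (Sbar S e) (Vbar S V e) →ₐ[Sbar S e] LamMod S V R e :=
  TensorAlgebra.lift (Sbar S e) (fbar S V R e)

lemma ThetaBar_Theta (x : TensorAlgebra S V) :
    ThetaBar S V R e (Theta S V e x) = pMap S V R e x := by
  induction x using TensorAlgebra.induction with
  | algebraMap s =>
    rw [(Theta S V e).commutes s]
    show ThetaBar S V R e (algebraMap (Sbar S e) _ (mkS S e s)) = _
    rw [(ThetaBar S V R e).commutes, pMap_algebraMap]
    rfl
  | ι v =>
    show ThetaBar S V R e (TensorAlgebra.lift S (jmap S V e) (TensorAlgebra.ι S v)) = _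
    rw [TensorAlgebra.lift_ι_apply]
    show ThetaBar S V R e (TensorAlgebra.ι (Sbar S e) (mkV S V e v)) = _
    show TensorAlgebra.lift (Sbar S e) (fbar S V R e)
        (TensorAlgebra.ι (Sbar S e) (mkV S V e v)) = _
    rw [TensorAlgebra.lift_ι_apply, fbar_mk]
  | mul a b ha hb => rw [map_mul, map_mul, ha, hb, map_mul]
  | add a b ha hb => rw [map_add, map_add, ha, hb, map_add]

lemma pMap_iota2 {r : V ⊗[S] V} (hr : r ∈ R) : pMap S V R e (iota2 S V r) = 0 := by
  show RingQuot.mkRingHom (eKill S V R e) (RingQuot.mkRingHom (qRel S V R) (iota2 S V r)) = 0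
  have h : qRel S V R (iota2 S V r) 0 := ⟨⟨r, hr, rfl⟩, rfl⟩
  rw [RingQuot.mkRingHom_rel h]
  simp
  exact map_zero (RingQuot.mkRingHom (eKill S V R e))

/-- `Tens_S(V) → Tens_{eSe}(eVe)/(π⊗π(R))`. -/
noncomputable def tC : TensorAlgebra S V →+* LamCorner S V R e :=
  (RingQuot.mkRingHom (qRelCorner S V R e)).comp (Theta S V e).toRingHom

lemma tC_rel : ∀ ⦃u v : TensorAlgebra S V⦄, qRel S V R u v → tC S V R e u = tC S V R e v := by
  rintro u v ⟨⟨r, hr, rfl⟩, rfl⟩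
  show RingQuot.mkRingHom (qRelCorner S V R e) (Theta S V e (iota2 S V r))
      = RingQuot.mkRingHom (qRelCorner S V R e) (Theta S V e 0)
  have h : qRelCorner S V R e (Theta S V e (iota2 S V r)) 0 := ⟨⟨r, hr, rfl⟩, rfl⟩
  rw [RingQuot.mkRingHom_rel h]
  simp

/-- `Λ → Tens_{eSe}(eVe)/(π⊗π(R))`. -/
noncomputable def Phi1 : Lam S V R →+* LamCorner S V R e :=
  RingQuot.lift ⟨tC S V R e, tC_rel S V R e⟩

lemma Phi1_rel : ∀ ⦃u v : Lam S V R⦄, eKill S V R e u v → Phi1 S V R e u = Phi1 S V R e v := by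
  rintro u v ⟨rfl, rfl⟩
  show Phi1 S V R e (RingQuot.mkRingHom (qRel S V R) (algebraMap S _ (1 - e))) = Phi1 S V R e 0
  rw [map_zero]
  show RingQuot.lift ⟨tC S V R e, tC_rel S V R e⟩
    (RingQuot.mkRingHom (qRel S V R) (algebraMap S _ (1 - e))) = 0
  rw [RingQuot.lift_mkRingHom_apply]
  show RingQuot.mkRingHom (qRelCorner S V R e) (Theta S V e (algebraMap S _ (1 - e))) = 0
  rw [(Theta S V e).commutes]
  have h1 : mkS S e (1 - e) = 0 :=
    Ideal.Quotient.eq_zero_iff_mem.mpr (Ideal.subset_span (Set.mem_singleton _))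
  show RingQuot.mkRingHom (qRelCorner S V R e)
      (algebraMap (Sbar S e) _ (mkS S e (1 - e))) = 0
  rw [h1, map_zero, map_zero]

/-- The forward map `Λ/Λ(1−e)Λ → Tens_{eSe}(eVe)/(π⊗π(R))`. -/
noncomputable def PhiMap : LamMod S V R e →+* LamCorner S V R e :=
  RingQuot.lift ⟨Phi1 S V R e, Phi1_rel S V R e⟩

lemma ThetaBar_rel : ∀ ⦃u v : TensorAlgebra (Sbar S e) (Vbar S V e)⦄,
    qRelCorner S V R e u v → (ThetaBar S V R e : _ →+* LamMod S V R e) u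
      = (ThetaBar S V R e : _ →+* LamMod S V R e) v := by
  rintro u v ⟨⟨r, hr, rfl⟩, rfl⟩
  show ThetaBar S V R e (Theta S V e (iota2 S V r)) = ThetaBar S V R e 0
  rw [ThetaBar_Theta, pMap_iota2 S V R e hr, map_zero]

/-- The inverse map `Tens_{eSe}(eVe)/(π⊗π(R)) → Λ/Λ(1−e)Λ`. -/
noncomputable def PsiMap : LamCorner S V R e →+* LamMod S V R e :=
  RingQuot.lift ⟨(ThetaBar S V R e : _ →+* LamMod S V R e), ThetaBar_rel S V R e⟩

lemma PhiMap_pMap (x : TensorAlgebra S V) :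
    PhiMap S V R e (pMap S V R e x)
      = RingQuot.mkRingHom (qRelCorner S V R e) (Theta S V e x) := by
  show RingQuot.lift ⟨Phi1 S V R e, Phi1_rel S V R e⟩
      (RingQuot.mkRingHom (eKill S V R e) (RingQuot.mkRingHom (qRel S V R) x)) = _
  refine (RingQuot.lift_mkRingHom_apply _ _ _).trans ?_
  show RingQuot.lift ⟨tC S V R e, tC_rel S V R e⟩ (RingQuot.mkRingHom (qRel S V R) x) = _
  rw [RingQuot.lift_mkRingHom_apply]
  rfl

lemma PsiMap_mk (y : TensorAlgebra (Sbar S e) (Vbar S V e)) :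
    PsiMap S V R e (RingQuot.mkRingHom (qRelCorner S V R e) y) = ThetaBar S V R e y :=
  RingQuot.lift_mkRingHom_apply _ _ _

lemma PhiMap_ThetaBar (y : TensorAlgebra (Sbar S e) (Vbar S V e)) :
    PhiMap S V R e (ThetaBar S V R e y) = RingQuot.mkRingHom (qRelCorner S V R e) y := by
  induction y using TensorAlgebra.induction with
  | algebraMap c =>
    obtain ⟨s, rfl⟩ := Ideal.Quotient.mk_surjective c
    have h1 : ThetaBar S V R e (algebraMap (Sbar S e) _ (mkS S e s))
        = pMap S V R e (algebraMap S _ s) := by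
      rw [(ThetaBar S V R e).commutes, pMap_algebraMap]; rfl
    show PhiMap S V R e (ThetaBar S V R e (algebraMap (Sbar S e) _ (mkS S e s))) = _
    rw [h1, PhiMap_pMap, (Theta S V e).commutes]
    rfl
  | ι x =>
    obtain ⟨v, rfl⟩ := Submodule.Quotient.mk_surjective _ x
    have h1 : ThetaBar S V R e (TensorAlgebra.ι (Sbar S e) (mkV S V e v))
        = pMap S V R e (TensorAlgebra.ι S v) := by
      show TensorAlgebra.lift (Sbar S e) (fbar S V R e)
        (TensorAlgebra.ι (Sbar S e) (mkV S V e v)) = _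
      rw [TensorAlgebra.lift_ι_apply, fbar_mk]
    show PhiMap S V R e (ThetaBar S V R e (TensorAlgebra.ι (Sbar S e) (mkV S V e v))) = _
    rw [h1, PhiMap_pMap]
    congr 1
    show TensorAlgebra.lift S (jmap S V e) (TensorAlgebra.ι S v) = _
    rw [TensorAlgebra.lift_ι_apply]
    rfl
  | mul a b ha hb => rw [map_mul, map_mul, ha, hb, map_mul]; rfl
  | add a b ha hb => rw [map_add, map_add, ha, hb, map_add]; rfl

/-- The isomorphism `Λ/Λ(1−e)Λ ≃ Tens_{eSe}(eVe)/(π⊗π(R))`. -/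
noncomputable def cornerEquiv : LamMod S V R e ≃+* LamCorner S V R e :=
  RingEquiv.ofRingHom (PhiMap S V R e) (PsiMap S V R e)
    (h₂ := by
      apply RingHom.ext
      intro z
      obtain ⟨a, rfl⟩ := RingQuot.mkRingHom_surjective (eKill S V R e) z
      obtain ⟨x, rfl⟩ := RingQuot.mkRingHom_surjective (qRel S V R) a
      show PsiMap S V R e (PhiMap S V R e (pMap S V R e x)) = pMap S V R e x
      rw [PhiMap_pMap, PsiMap_mk, ThetaBar_Theta])
    (h₁ := by
      apply RingHom.ext
      intro w
      obtain ⟨y, rfl⟩ := RingQuot.mkRingHom_surjective (qRelCorner S V R e) w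
      show PhiMap S V R e (PsiMap S V R e (RingQuot.mkRingHom (qRelCorner S V R e) y)) = _
      rw [PsiMap_mk, PhiMap_ThetaBar]
      rfl)

end Proof

/-- Let `Λ = Tens_S(V)/(R)` be a quadratic algebra over a basic
semisimple base `S` (a finite product of copies of `k`) and `e ∈ S` an idempotent of
degree `0`.  Then `Λ/Λ(1−e)Λ ≅ Tens_{eSe}(eVe)/(π⊗π(R))` where `π : V → eVe` is
`v ↦ eve`; in particular `Λ/Λ(1−e)Λ` is again a quadratic algebra. -/
theorem stmt_15 (k : Type) [Field k] (S : Type) [CommRing S] [Algebra k S]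
    (hS : ∃ n : ℕ, Nonempty (S ≃ₐ[k] (Fin n → k)))
    (V : Type) [AddCommGroup V] [Module S V]
    (R : Set (V ⊗[S] V)) (e : S) (he : IsIdempotentElem e) :
    Nonempty (LamMod S V R e ≃+* LamCorner S V R e) := by
  exact ⟨cornerEquiv S V R e⟩
end

section
/- Let Π_n be the preprojective algebra of type A_n (n ≥ 2), defined as the path algebra of the double quiver on vertices 1,…,n with arrows x_i : i → i+1 and y_{i+1} : i+1 → i, modulo the relations x₁y₂, x_i y_{i+1} − y_i x_{i−1} (2 ≤ i ≤ n−1), and y_n x_{n−1}. Then there is a short exact sequence of graded Π_n-Π_n-bimodules 0 → (Π_{n−1})⟨−1⟩ → Π_n → kA⃗_n → 0, where kA⃗_n is the path algebra of the linearly oriented A_n quiver viewed as a quotient of Π_n by the ideal generated by all y_i, and Π_{n−1} is inflated to a Π_n-bimodule via the quotient maps killing e_n on the left and e₁ on the right. -/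
set_option synthInstance.maxHeartbeats 1000000
set_option maxHeartbeats 2000000

/-!
Let `Π_n` (`n ≥ 2`) be the preprojective algebra of type `A_n`.  There is a short exact
sequence of `Π_n`-`Π_n`-bimodules `0 → Π_{n−1}⟨−1⟩ → Π_n → kA⃗_n → 0`, where `kA⃗_n` is the
quotient of `Π_n` by the ideal generated by the arrows `y`, and `Π_{n−1}` is inflated to a
`Π_n`-bimodule via the two quotient maps `π^r` (killing the first vertex) and `π^ℓ`
(killing the last vertex); the embedding sends `e_i ↦ y_{i+1}` (which accounts for the
degree shift `⟨−1⟩`).  Below `n = m + 2`, so `Π_n` has vertices `Fin (m+2)` and `Π_{n−1}`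
has vertices `Fin (m+1)`.
-/

/-- Generators of the preprojective algebra on `N+1` vertices: vertex idempotents `e i`
and arrows `x i : i → i+1`, `y i : i+1 → i`. -/
inductive PGen (N : ℕ) : Type
  | e : Fin (N + 1) → PGen N
  | x : Fin N → PGen N
  | y : Fin N → PGen N

namespace PGen

/-- The defining relations of the preprojective algebra of type `A_{N+1}`:
path algebra relations together with `x₁y₂ = 0`, `x_iy_{i+1} − y_ix_{i−1} = 0`,
`y_Nx_{N−1} = 0` (in the 1-indexed notation of the paper). -/
inductive PRel (k : Type) [Field k] (N : ℕ) :
    FreeAlgebra k (PGen N) → FreeAlgebra k (PGen N) → Prop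
  | sum : PRel k N (∑ i : Fin (N + 1), FreeAlgebra.ι k (e i)) 1
  | idem : ∀ i, PRel k N (FreeAlgebra.ι k (e i) * FreeAlgebra.ι k (e i)) (FreeAlgebra.ι k (e i))
  | orth : ∀ i j, i ≠ j → PRel k N (FreeAlgebra.ι k (e i) * FreeAlgebra.ι k (e j)) 0
  | xsrc : ∀ i : Fin N,
      PRel k N (FreeAlgebra.ι k (e i.castSucc) * FreeAlgebra.ι k (x i)) (FreeAlgebra.ι k (x i))
  | xtgt : ∀ i : Fin N,
      PRel k N (FreeAlgebra.ι k (x i) * FreeAlgebra.ι k (e i.succ)) (FreeAlgebra.ι k (x i))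
  | ysrc : ∀ i : Fin N,
      PRel k N (FreeAlgebra.ι k (e i.succ) * FreeAlgebra.ι k (y i)) (FreeAlgebra.ι k (y i))
  | ytgt : ∀ i : Fin N,
      PRel k N (FreeAlgebra.ι k (y i) * FreeAlgebra.ι k (e i.castSucc)) (FreeAlgebra.ι k (y i))
  | bdry0 : ∀ i : Fin N, (i : ℕ) = 0 →
      PRel k N (FreeAlgebra.ι k (x i) * FreeAlgebra.ι k (y i)) 0
  | middle : ∀ i j : Fin N, (i : ℕ) + 1 = j →
      PRel k N (FreeAlgebra.ι k (x j) * FreeAlgebra.ι k (y j))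
        (FreeAlgebra.ι k (y i) * FreeAlgebra.ι k (x i))
  | bdryN : ∀ i : Fin N, (i : ℕ) = N - 1 →
      PRel k N (FreeAlgebra.ι k (y i) * FreeAlgebra.ι k (x i)) 0

end PGen

/-- The preprojective algebra `Π_{N+1}` of type `A_{N+1}`. -/
def PiA (k : Type) [Field k] (N : ℕ) : Type := RingQuot (PGen.PRel k N)

noncomputable instance (k : Type) [Field k] (N : ℕ) : Ring (PiA k N) :=
  inferInstanceAs (Ring (RingQuot (PGen.PRel k N)))

noncomputable instance (k : Type) [Field k] (N : ℕ) : Algebra k (PiA k N) :=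
  inferInstanceAs (Algebra k (RingQuot (PGen.PRel k N)))

/-- Vertex idempotents of `Π_{N+1}`. -/
noncomputable def eP (k : Type) [Field k] (N : ℕ) (i : Fin (N + 1)) : PiA k N :=
  RingQuot.mkAlgHom k (PGen.PRel k N) (FreeAlgebra.ι k (PGen.e i))

/-- Arrows `x` of `Π_{N+1}`. -/
noncomputable def xP (k : Type) [Field k] (N : ℕ) (i : Fin N) : PiA k N :=
  RingQuot.mkAlgHom k (PGen.PRel k N) (FreeAlgebra.ι k (PGen.x i))

/-- Arrows `y` of `Π_{N+1}`. -/
noncomputable def yP (k : Type) [Field k] (N : ℕ) (i : Fin N) : PiA k N :=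
  RingQuot.mkAlgHom k (PGen.PRel k N) (FreeAlgebra.ι k (PGen.y i))

/-- The relations killing the arrows `y`, presenting `kA⃗_n` as a quotient of `Π_n`. -/
def yKill (k : Type) [Field k] (N : ℕ) : PiA k N → PiA k N → Prop :=
  fun u v => (∃ i : Fin N, u = yP k N i) ∧ v = 0

namespace Stmt16

variable {k : Type} [Field k] {N : ℕ}

open PGen

lemma mkrel {u v : FreeAlgebra k (PGen N)} (h : PGen.PRel k N u v) :
    RingQuot.mkAlgHom k (PGen.PRel k N) u = RingQuot.mkAlgHom k (PGen.PRel k N) v :=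
  RingQuot.mkAlgHom_rel k h

lemma sum_e : ∑ i : Fin (N+1), eP k N i = 1 := by
  have := mkrel (k := k) (PGen.PRel.sum (k := k) (N := N))
  simp only [eP, map_sum, map_one] at this ⊢; exact this

lemma ee_same (i : Fin (N+1)) : eP k N i * eP k N i = eP k N i := by
  have := mkrel (k := k) (PGen.PRel.idem (k := k) (N := N) i)
  simp only [eP, map_mul, map_zero] at this ⊢; exact this

lemma ee_ne {i j : Fin (N+1)} (h : i ≠ j) : eP k N i * eP k N j = 0 := by
  have := mkrel (k := k) (PGen.PRel.orth (k := k) (N := N) i j h)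
  simp only [eP, map_mul, map_zero] at this ⊢; exact this

lemma ex (i : Fin N) : eP k N i.castSucc * xP k N i = xP k N i := by
  have := mkrel (k := k) (PGen.PRel.xsrc (k := k) (N := N) i)
  simp only [eP, xP, map_mul, map_zero] at this ⊢; exact this

lemma xe (i : Fin N) : xP k N i * eP k N i.succ = xP k N i := by
  have := mkrel (k := k) (PGen.PRel.xtgt (k := k) (N := N) i)
  simp only [eP, xP, map_mul, map_zero] at this ⊢; exact this

lemma ey (i : Fin N) : eP k N i.succ * yP k N i = yP k N i := by
  have := mkrel (k := k) (PGen.PRel.ysrc (k := k) (N := N) i)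
  simp only [eP, yP, map_mul, map_zero] at this ⊢; exact this

lemma ye (i : Fin N) : yP k N i * eP k N i.castSucc = yP k N i := by
  have := mkrel (k := k) (PGen.PRel.ytgt (k := k) (N := N) i)
  simp only [eP, yP, map_mul, map_zero] at this ⊢; exact this

lemma xy0 (i : Fin N) (h : (i : ℕ) = 0) : xP k N i * yP k N i = 0 := by
  have := mkrel (k := k) (PGen.PRel.bdry0 (k := k) (N := N) i h)
  simp only [xP, yP, map_mul, map_zero] at this ⊢; exact this

lemma xym (i j : Fin N) (h : (i : ℕ) + 1 = j) :
    xP k N j * yP k N j = yP k N i * xP k N i := by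
  have := mkrel (k := k) (PGen.PRel.middle (k := k) (N := N) i j h)
  simp only [xP, yP, map_mul, map_zero] at this ⊢; exact this

lemma yxN (i : Fin N) (h : (i : ℕ) = N - 1) : yP k N i * xP k N i = 0 := by
  have := mkrel (k := k) (PGen.PRel.bdryN (k := k) (N := N) i h)
  simp only [xP, yP, map_mul, map_zero] at this ⊢; exact this

-- derived vanishing lemmas
lemma xe_ne (i : Fin N) {v : Fin (N+1)} (h : v ≠ i.succ) : xP k N i * eP k N v = 0 := by
  rw [← xe i, mul_assoc, ee_ne (Ne.symm h), mul_zero]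

lemma ex_ne (i : Fin N) {v : Fin (N+1)} (h : v ≠ i.castSucc) : eP k N v * xP k N i = 0 := by
  rw [← ex i, ← mul_assoc, ee_ne h, zero_mul]

lemma ye_ne (i : Fin N) {v : Fin (N+1)} (h : v ≠ i.castSucc) : yP k N i * eP k N v = 0 := by
  rw [← ye i, mul_assoc, ee_ne (Ne.symm h), mul_zero]

lemma ey_ne (i : Fin N) {v : Fin (N+1)} (h : v ≠ i.succ) : eP k N v * yP k N i = 0 := by
  rw [← ey i, ← mul_assoc, ee_ne h, zero_mul]

lemma xy_ne {i j : Fin N} (h : i.succ ≠ j.succ) : xP k N i * yP k N j = 0 := by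
  rw [← ey j, ← mul_assoc, xe_ne i (Ne.symm h), zero_mul]

lemma yx_ne {i j : Fin N} (h : i.castSucc ≠ j.castSucc) : yP k N i * xP k N j = 0 := by
  rw [← ex j, ← mul_assoc, ye_ne i (Ne.symm h), zero_mul]

lemma yy_ne {i j : Fin N} (h : i.castSucc ≠ j.succ) : yP k N i * yP k N j = 0 := by
  rw [← ey j, ← mul_assoc, ye_ne i (Ne.symm h), zero_mul]

/-- The sum of all the `y` arrows. -/
noncomputable def YP (k : Type) [Field k] (N : ℕ) : PiA k N := ∑ j : Fin N, yP k N j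

lemma e_mul_Y (j : Fin N) : eP k N j.succ * YP k N = yP k N j := by
  rw [YP, Finset.mul_sum]
  rw [Finset.sum_eq_single j (fun t _ ht => ey_ne t (by simpa using (Ne.symm ht)))
    (fun h => absurd (Finset.mem_univ j) h)]
  exact ey j

lemma e0_mul_Y : eP k N 0 * YP k N = 0 := by
  rw [YP, Finset.mul_sum]
  exact Finset.sum_eq_zero fun t _ => ey_ne t (Ne.symm (Fin.succ_ne_zero t))

lemma Y_mul_e (j : Fin N) : YP k N * eP k N j.castSucc = yP k N j := by
  rw [YP, Finset.sum_mul]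
  rw [Finset.sum_eq_single j (fun t _ ht => ye_ne t (by simpa using (Ne.symm ht)))
    (fun h => absurd (Finset.mem_univ j) h)]
  exact ye j

lemma Y_mul_elast : YP k N * eP k N (Fin.last N) = 0 := by
  rw [YP, Finset.sum_mul]
  exact Finset.sum_eq_zero fun t _ =>
    ye_ne t (by simp [Fin.ext_iff]; omega)

lemma x_mul_Y (a : Fin N) : xP k N a * YP k N = xP k N a * yP k N a := by
  rw [YP, Finset.mul_sum]
  rw [Finset.sum_eq_single a (fun t _ ht => xy_ne (by simpa using (Ne.symm ht)))
    (fun h => absurd (Finset.mem_univ a) h)]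

lemma Y_mul_x (a : Fin N) : YP k N * xP k N a = yP k N a * xP k N a := by
  rw [YP, Finset.sum_mul]
  rw [Finset.sum_eq_single a (fun t _ ht => yx_ne (by simpa using ht))
    (fun h => absurd (Finset.mem_univ a) h)]

lemma y_mul_Y (a b : Fin N) (h : (b : ℕ) + 1 = (a : ℕ)) :
    yP k N a * YP k N = yP k N a * yP k N b := by
  rw [YP, Finset.mul_sum]
  rw [Finset.sum_eq_single b (fun t _ ht => yy_ne (by simp [Fin.ext_iff]; omega))
    (fun h => absurd (Finset.mem_univ b) h)]

lemma y0_mul_Y (a : Fin N) (h : (a : ℕ) = 0) : yP k N a * YP k N = 0 := by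
  rw [YP, Finset.mul_sum]
  exact Finset.sum_eq_zero fun t _ => yy_ne (by simp [Fin.ext_iff]; omega)

lemma Y_mul_y (a b : Fin N) (h : (a : ℕ) + 1 = (b : ℕ)) :
    YP k N * yP k N a = yP k N b * yP k N a := by
  rw [YP, Finset.sum_mul]
  rw [Finset.sum_eq_single b (fun t _ ht => yy_ne (by simp [Fin.ext_iff]; omega))
    (fun h => absurd (Finset.mem_univ b) h)]

lemma Y_mul_ylast (a : Fin N) (h : (a : ℕ) = N - 1) : YP k N * yP k N a = 0 := by
  rw [YP, Finset.sum_mul]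
  exact Finset.sum_eq_zero fun t _ => yy_ne (by simp [Fin.ext_iff]; omega)

end Stmt16
namespace Stmt16

variable {k : Type} [Field k] {N : ℕ}

-- value-indexed forms of the toolkit
lemma eev_same {v w : Fin (N+1)} (h : (v:ℕ) = (w:ℕ)) : eP k N v * eP k N w = eP k N w := by
  rw [show v = w from Fin.ext h, ee_same]

lemma eev_ne {v w : Fin (N+1)} (h : (v:ℕ) ≠ (w:ℕ)) : eP k N v * eP k N w = 0 :=
  ee_ne fun hh => h (congrArg Fin.val hh)

lemma exv {v : Fin (N+1)} {a : Fin N} (h : (v:ℕ) = (a:ℕ)) : eP k N v * xP k N a = xP k N a := by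
  rw [show v = a.castSucc from Fin.ext (by simpa using h), ex]

lemma exv_ne {v : Fin (N+1)} {a : Fin N} (h : (v:ℕ) ≠ (a:ℕ)) : eP k N v * xP k N a = 0 :=
  ex_ne a fun hh => h (by simpa using congrArg Fin.val hh)

lemma xev {v : Fin (N+1)} {a : Fin N} (h : (v:ℕ) = (a:ℕ)+1) : xP k N a * eP k N v = xP k N a := by
  rw [show v = a.succ from Fin.ext (by simpa using h), xe]

lemma xev_ne {v : Fin (N+1)} {a : Fin N} (h : (v:ℕ) ≠ (a:ℕ)+1) : xP k N a * eP k N v = 0 :=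
  xe_ne a fun hh => h (by simpa using congrArg Fin.val hh)

lemma eyv {v : Fin (N+1)} {a : Fin N} (h : (v:ℕ) = (a:ℕ)+1) : eP k N v * yP k N a = yP k N a := by
  rw [show v = a.succ from Fin.ext (by simpa using h), ey]

lemma eyv_ne {v : Fin (N+1)} {a : Fin N} (h : (v:ℕ) ≠ (a:ℕ)+1) : eP k N v * yP k N a = 0 :=
  ey_ne a fun hh => h (by simpa using congrArg Fin.val hh)

lemma yev {v : Fin (N+1)} {a : Fin N} (h : (v:ℕ) = (a:ℕ)) : yP k N a * eP k N v = yP k N a := by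
  rw [show v = a.castSucc from Fin.ext (by simpa using h), ye]

lemma yev_ne {v : Fin (N+1)} {a : Fin N} (h : (v:ℕ) ≠ (a:ℕ)) : yP k N a * eP k N v = 0 :=
  ye_ne a fun hh => h (by simpa using congrArg Fin.val hh)

lemma xyv_ne {a b : Fin N} (h : (a:ℕ) ≠ (b:ℕ)) : xP k N a * yP k N b = 0 :=
  xy_ne (by simp [Fin.ext_iff]; omega)

lemma yxv_ne {a b : Fin N} (h : (a:ℕ) ≠ (b:ℕ)) : yP k N a * xP k N b = 0 :=
  yx_ne (by simp [Fin.ext_iff]; omega)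

lemma yyv_ne {a b : Fin N} (h : (a:ℕ) ≠ (b:ℕ)+1) : yP k N a * yP k N b = 0 :=
  yy_ne (by simp [Fin.ext_iff]; omega)

end Stmt16
namespace Stmt16

variable {k : Type} [Field k] {N : ℕ}

open PGen

/-- The quotient map from the free algebra, with codomain `PiA`. -/
noncomputable def mkP (k : Type) [Field k] (N : ℕ) : FreeAlgebra k (PGen N) →ₐ[k] PiA k N :=
  RingQuot.mkAlgHom k (PGen.PRel k N)

lemma mkP_surjective : Function.Surjective (mkP k N) :=
  RingQuot.mkAlgHom_surjective k (PGen.PRel k N)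

/-- The ascending chains `e₀`, `x₀x₁⋯x_{t-1}`. -/
noncomputable def ch (k : Type) [Field k] (N : ℕ) : ℕ → PiA k N
  | 0 => eP k N 0
  | (t+1) => if h : t < N then ch k N t * xP k N ⟨t, h⟩ else 0

lemma ch_zero (t : ℕ) (h : N < t) : ch k N t = 0 := by
  cases t with
  | zero => omega
  | succ t => rw [ch, dif_neg (by omega)]

lemma ch_e (t : ℕ) (h : t < N + 1) : ch k N t * eP k N ⟨t, h⟩ = ch k N t := by
  induction t with
  | zero => exact ee_same 0
  | succ t _ =>
    rw [ch, dif_pos (by omega)]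
    rw [mul_assoc]
    have : (⟨t, by omega⟩ : Fin N).succ = ⟨t+1, h⟩ := by simp [Fin.ext_iff]
    rw [← this, xe]

lemma ch_e' (t : ℕ) (v : Fin (N+1)) :
    ch k N t * eP k N v = if (v : ℕ) = t then ch k N t else 0 := by
  by_cases hv : (v : ℕ) = t
  · rw [if_pos hv]
    have : v = ⟨t, by omega⟩ := by simp [Fin.ext_iff, hv]
    rw [this, ch_e]
  · rw [if_neg hv]
    by_cases ht : t < N + 1
    · rw [← ch_e t ht, mul_assoc, ee_ne (by simp [Fin.ext_iff]; omega), mul_zero]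
    · rw [ch_zero t (by omega), zero_mul]

lemma ch_y (t : ℕ) (j : Fin N) : ch k N t * yP k N j = 0 := by
  induction t generalizing j with
  | zero => exact ey_ne j (Ne.symm (Fin.succ_ne_zero j))
  | succ t ih =>
    by_cases ht : t < N
    · rw [ch, dif_pos ht]
      by_cases hj : (j : ℕ) = t
      · have hjt : j = ⟨t, ht⟩ := by simp [Fin.ext_iff, hj]
        subst hjt
        cases t with
        | zero => rw [mul_assoc, xy0 _ rfl, mul_zero]
        | succ s =>
          rw [mul_assoc, xym ⟨s, by omega⟩ _ (by simp), ← mul_assoc, ih, zero_mul]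
      · rw [mul_assoc, xy_ne (by simp [Fin.ext_iff]; omega), mul_zero]
    · rw [ch, dif_neg ht, zero_mul]

lemma ch_x (t : ℕ) (a : Fin N) :
    ch k N t * xP k N a = if (a : ℕ) = t then ch k N (t+1) else 0 := by
  by_cases ha : (a : ℕ) = t
  · rw [if_pos ha]
    have ht : t < N := by omega
    have : a = ⟨t, ht⟩ := by simp [Fin.ext_iff, ha]
    rw [this, ch, dif_pos ht]
  · rw [if_neg ha]
    by_cases ht : t < N + 1
    · rw [← ch_e t ht, mul_assoc, ex_ne a (by simp [Fin.ext_iff]; omega), mul_zero]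
    · rw [ch_zero t (by omega), zero_mul]

/-- The span of the chains; absorbs right multiplication. -/
noncomputable def U (k : Type) [Field k] (N : ℕ) : Submodule k (PiA k N) :=
  Submodule.span k {z | ∃ t, z = ch k N t}

lemma ch_mem_U (t : ℕ) : ch k N t ∈ U k N := Submodule.subset_span ⟨t, rfl⟩

lemma U_mul_gen (g : PGen N) {z : PiA k N} (hz : z ∈ U k N) :
    z * mkP k N (FreeAlgebra.ι k g) ∈ U k N := by
  induction hz using Submodule.span_induction with
  | mem z hzm =>
    obtain ⟨t, rfl⟩ := hzm
    cases g with
    | e v =>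
      show ch k N t * eP k N v ∈ U k N
      rw [ch_e']
      split
      · exact ch_mem_U t
      · exact zero_mem _
    | x a =>
      show ch k N t * xP k N a ∈ U k N
      rw [ch_x]
      split
      · exact ch_mem_U (t+1)
      · exact zero_mem _
    | y a =>
      show ch k N t * yP k N a ∈ U k N
      rw [ch_y]
      exact zero_mem _
  | zero => rw [zero_mul]; exact zero_mem _
  | add a b _ _ iha ihb => rw [add_mul]; exact add_mem iha ihb
  | smul c a _ iha => rw [smul_mul_assoc]; exact Submodule.smul_mem _ c iha

lemma U_mul (w : FreeAlgebra k (PGen N)) {z : PiA k N} (hz : z ∈ U k N) :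
    z * mkP k N w ∈ U k N := by
  induction w using FreeAlgebra.induction generalizing z with
  | grade0 r =>
    rw [AlgHom.commutes]
    rw [← Algebra.commutes r z, ← Algebra.smul_def]
    exact Submodule.smul_mem _ r hz
  | grade1 g => exact U_mul_gen g hz
  | mul a b iha ihb => rw [map_mul, ← mul_assoc]; exact ihb (iha hz)
  | add a b iha ihb => rw [map_add, mul_add]; exact add_mem (iha hz) (ihb hz)

lemma U_mul_y {z : PiA k N} (hz : z ∈ U k N) (j : Fin N) : z * yP k N j = 0 := by
  induction hz using Submodule.span_induction with
  | mem z hzm => obtain ⟨t, rfl⟩ := hzm; exact ch_y t j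
  | zero => rw [zero_mul]
  | add a b _ _ iha ihb => rw [add_mul, iha, ihb, add_zero]
  | smul c a _ iha => rw [smul_mul_assoc, iha, smul_zero]

/-- Key vanishing: `e₀ · z · y_j = 0` for every `z`. -/
lemma e0_mul_mul_y (z : PiA k N) (j : Fin N) : eP k N 0 * z * yP k N j = 0 := by
  obtain ⟨w, rfl⟩ := mkP_surjective z
  exact U_mul_y (U_mul w (ch_mem_U 0)) j

lemma e0_mul_mul_Y (z : PiA k N) : eP k N 0 * z * YP k N = 0 := by
  rw [YP, Finset.mul_sum]
  exact Finset.sum_eq_zero fun t _ => e0_mul_mul_y z t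

end Stmt16
namespace Stmt16

open PGen

variable (k : Type) [Field k] (m : ℕ)

/-! ### The map `π^r` (kill first vertex, shift down) -/

noncomputable def grGen : PGen (m+1) → PiA k m
  | .e v => if _ : 0 < (v : ℕ) then eP k m ⟨(v:ℕ)-1, by have := v.isLt; omega⟩ else 0
  | .x a => if _ : 0 < (a : ℕ) then xP k m ⟨(a:ℕ)-1, by have := a.isLt; omega⟩ else 0
  | .y a => if _ : 0 < (a : ℕ) then yP k m ⟨(a:ℕ)-1, by have := a.isLt; omega⟩ else 0

noncomputable def grF : FreeAlgebra k (PGen (m+1)) →ₐ[k] PiA k m :=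
  FreeAlgebra.lift k (grGen k m)

lemma grF_e (v : Fin (m+2)) : grF k m (FreeAlgebra.ι k (PGen.e v)) =
    if _ : 0 < (v : ℕ) then eP k m ⟨(v:ℕ)-1, by have := v.isLt; omega⟩ else 0 := by
  simp [grF, grGen]

lemma grF_x (a : Fin (m+1)) : grF k m (FreeAlgebra.ι k (PGen.x a)) =
    if _ : 0 < (a : ℕ) then xP k m ⟨(a:ℕ)-1, by have := a.isLt; omega⟩ else 0 := by
  simp [grF, grGen]

lemma grF_y (a : Fin (m+1)) : grF k m (FreeAlgebra.ι k (PGen.y a)) =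
    if _ : 0 < (a : ℕ) then yP k m ⟨(a:ℕ)-1, by have := a.isLt; omega⟩ else 0 := by
  simp [grF, grGen]

lemma grF_resp : ∀ ⦃u v : FreeAlgebra k (PGen (m+1))⦄, PGen.PRel k (m+1) u v →
    grF k m u = grF k m v := by
  intro u v h
  cases h with
  | sum =>
    rw [map_sum, map_one, Fin.sum_univ_succ]
    rw [grF_e, dif_neg (by simp)]
    have : ∀ i : Fin (m+1), grF k m (FreeAlgebra.ι k (PGen.e i.succ)) = eP k m i := by
      intro i
      rw [grF_e, dif_pos (by simp)]
      congr 1 <;> simp [Fin.ext_iff]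
    simp only [this]
    rw [zero_add, sum_e]
  | idem i =>
    rw [map_mul, grF_e]
    split
    · exact ee_same _
    · rw [zero_mul]
  | orth i j hij =>
    rw [map_mul, map_zero, grF_e, grF_e]
    split
    · split
      · exact eev_ne (by simp only [Fin.ext_iff] at hij ⊢; omega)
      · rw [mul_zero]
    · rw [zero_mul]
  | xsrc i =>
    rw [map_mul, grF_e, grF_x]
    by_cases h : 0 < (i : ℕ)
    · rw [dif_pos h, dif_pos (by simpa using h)]
      exact exv (by simp <;> omega)
    · rw [dif_neg h, dif_neg (by simpa using h), mul_zero]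
  | xtgt i =>
    rw [map_mul, grF_e, grF_x]
    by_cases h : 0 < (i : ℕ)
    · rw [dif_pos h, dif_pos (by simp)]
      exact xev (by simp <;> omega)
    · rw [dif_neg h, zero_mul]
  | ysrc i =>
    rw [map_mul, grF_e, grF_y]
    by_cases h : 0 < (i : ℕ)
    · rw [dif_pos h, dif_pos (by simp)]
      exact eyv (by simp <;> omega)
    · rw [dif_neg h, mul_zero]
  | ytgt i =>
    rw [map_mul, grF_e, grF_y]
    by_cases h : 0 < (i : ℕ)
    · rw [dif_pos h, dif_pos (by simpa using h)]
      exact yev (by simp <;> omega)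
    · rw [dif_neg h, zero_mul]
  | bdry0 i h0 =>
    rw [map_mul, map_zero, grF_x, dif_neg (by omega), zero_mul]
  | middle i j hij =>
    rw [map_mul, map_mul, grF_x, grF_y, grF_x, grF_y]
    rw [dif_pos (by omega), dif_pos (by omega)]
    by_cases h : 0 < (i : ℕ)
    · rw [dif_pos h, dif_pos h]
      exact xym _ _ (by simp <;> omega)
    · rw [dif_neg h, zero_mul]
      exact xy0 _ (by simp <;> omega)
  | bdryN i hN =>
    rw [map_mul, map_zero, grF_x, grF_y]
    by_cases h : 0 < (i : ℕ)
    · rw [dif_pos h, dif_pos h]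
      exact yxN _ (by simp <;> omega)
    · rw [dif_neg h, zero_mul]

/-- `π^r : Π_{m+2} → Π_{m+1}`. -/
noncomputable def pir : PiA k (m+1) →ₐ[k] PiA k m :=
  RingQuot.liftAlgHom k ⟨grF k m, grF_resp k m⟩

lemma pir_mk (w : FreeAlgebra k (PGen (m+1))) :
    pir k m (RingQuot.mkAlgHom k (PGen.PRel k (m+1)) w) = grF k m w := by
  unfold pir; exact RingQuot.liftAlgHom_mkAlgHom_apply (S := k) (grF k m) (grF_resp k m) w

lemma pir_e (v : Fin (m+2)) : pir k m (eP k (m+1) v) =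
    if _ : 0 < (v : ℕ) then eP k m ⟨(v:ℕ)-1, by have := v.isLt; omega⟩ else 0 := by
  rw [eP, pir_mk, grF_e]

lemma pir_x (a : Fin (m+1)) : pir k m (xP k (m+1) a) =
    if _ : 0 < (a : ℕ) then xP k m ⟨(a:ℕ)-1, by have := a.isLt; omega⟩ else 0 := by
  rw [xP, pir_mk, grF_x]

lemma pir_y (a : Fin (m+1)) : pir k m (yP k (m+1) a) =
    if _ : 0 < (a : ℕ) then yP k m ⟨(a:ℕ)-1, by have := a.isLt; omega⟩ else 0 := by
  rw [yP, pir_mk, grF_y]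

lemma pir_e0 : pir k m (eP k (m+1) 0) = 0 := by rw [pir_e, dif_neg (by simp)]

lemma pir_esucc (i : Fin (m+1)) : pir k m (eP k (m+1) i.succ) = eP k m i := by
  rw [pir_e, dif_pos (by simp)]; congr 1 <;> simp [Fin.ext_iff]

lemma pir_x0 : pir k m (xP k (m+1) 0) = 0 := by rw [pir_x, dif_neg (by simp)]

lemma pir_xsucc (i : Fin m) : pir k m (xP k (m+1) i.succ) = xP k m i := by
  rw [pir_x, dif_pos (by simp)]; congr 1 <;> simp [Fin.ext_iff]

lemma pir_y0 : pir k m (yP k (m+1) 0) = 0 := by rw [pir_y, dif_neg (by simp)]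

lemma pir_ysucc (i : Fin m) : pir k m (yP k (m+1) i.succ) = yP k m i := by
  rw [pir_y, dif_pos (by simp)]; congr 1 <;> simp [Fin.ext_iff]

end Stmt16
namespace Stmt16

open PGen

variable (k : Type) [Field k] (m : ℕ)

/-! ### The map `π^ℓ` (kill last vertex) -/

noncomputable def plGen : PGen (m+1) → PiA k m
  | .e v => if h : (v : ℕ) < m + 1 then eP k m ⟨(v:ℕ), h⟩ else 0
  | .x a => if h : (a : ℕ) < m then xP k m ⟨(a:ℕ), h⟩ else 0
  | .y a => if h : (a : ℕ) < m then yP k m ⟨(a:ℕ), h⟩ else 0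

noncomputable def plF : FreeAlgebra k (PGen (m+1)) →ₐ[k] PiA k m :=
  FreeAlgebra.lift k (plGen k m)

lemma plF_e (v : Fin (m+2)) : plF k m (FreeAlgebra.ι k (PGen.e v)) =
    if h : (v : ℕ) < m + 1 then eP k m ⟨(v:ℕ), h⟩ else 0 := by
  simp [plF, plGen]

lemma plF_x (a : Fin (m+1)) : plF k m (FreeAlgebra.ι k (PGen.x a)) =
    if h : (a : ℕ) < m then xP k m ⟨(a:ℕ), h⟩ else 0 := by
  simp [plF, plGen]

lemma plF_y (a : Fin (m+1)) : plF k m (FreeAlgebra.ι k (PGen.y a)) =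
    if h : (a : ℕ) < m then yP k m ⟨(a:ℕ), h⟩ else 0 := by
  simp [plF, plGen]

lemma plF_resp : ∀ ⦃u v : FreeAlgebra k (PGen (m+1))⦄, PGen.PRel k (m+1) u v →
    plF k m u = plF k m v := by
  intro u v h
  cases h with
  | sum =>
    rw [map_sum, map_one, Fin.sum_univ_castSucc]
    have : ∀ i : Fin (m+1), plF k m (FreeAlgebra.ι k (PGen.e i.castSucc)) = eP k m i := by
      intro i
      rw [plF_e, dif_pos (by simp <;> omega)]
      congr 1 <;> simp [Fin.ext_iff]
    simp only [this]
    rw [plF_e, dif_neg (by simp), add_zero, sum_e]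
  | idem i =>
    rw [map_mul, plF_e]
    split
    · exact ee_same _
    · rw [zero_mul]
  | orth i j hij =>
    rw [map_mul, map_zero, plF_e, plF_e]
    split
    · split
      · exact eev_ne (by simp only [Fin.ext_iff] at hij ⊢; omega)
      · rw [mul_zero]
    · rw [zero_mul]
  | xsrc i =>
    rw [map_mul, plF_e, plF_x, dif_pos (show ((i.castSucc : Fin (m+2)) : ℕ) < m + 1 by simp <;> omega)]
    by_cases h : (i : ℕ) < m
    · rw [dif_pos h]
      exact exv (by simp <;> omega)
    · rw [dif_neg h, mul_zero]
  | xtgt i =>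
    rw [map_mul, plF_e, plF_x]
    by_cases h : (i : ℕ) < m
    · rw [dif_pos h, dif_pos (by simp <;> omega)]
      exact xev (by simp <;> omega)
    · rw [dif_neg h, zero_mul]
  | ysrc i =>
    rw [map_mul, plF_e, plF_y]
    by_cases h : (i : ℕ) < m
    · rw [dif_pos h, dif_pos (by simp <;> omega)]
      exact eyv (by simp <;> omega)
    · rw [dif_neg h, mul_zero]
  | ytgt i =>
    rw [map_mul, plF_e, plF_y, dif_pos (show ((i.castSucc : Fin (m+2)) : ℕ) < m + 1 by simp <;> omega)]
    by_cases h : (i : ℕ) < m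
    · rw [dif_pos h]
      exact yev (by simp <;> omega)
    · rw [dif_neg h, zero_mul]
  | bdry0 i h0 =>
    rw [map_mul, map_zero, plF_x, plF_y]
    by_cases h : (i : ℕ) < m
    · rw [dif_pos h, dif_pos h]
      exact xy0 _ h0
    · rw [dif_neg h, zero_mul]
  | middle i j hij =>
    rw [map_mul, map_mul, plF_x, plF_y, plF_x, plF_y]
    have hi : (i : ℕ) < m := by have := j.isLt; omega
    rw [dif_pos hi, dif_pos hi]
    by_cases h : (j : ℕ) < m
    · rw [dif_pos h, dif_pos h]
      exact xym _ _ (by simp <;> omega)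
    · rw [dif_neg h, zero_mul]
      exact (yxN _ (by show (i:ℕ) = m - 1; omega)).symm
  | bdryN i hN =>
    rw [map_mul, map_zero, plF_x, plF_y, dif_neg (by omega), zero_mul]

/-- `π^ℓ : Π_{m+2} → Π_{m+1}`. -/
noncomputable def pil : PiA k (m+1) →ₐ[k] PiA k m :=
  RingQuot.liftAlgHom k ⟨plF k m, plF_resp k m⟩

lemma pil_mk (w : FreeAlgebra k (PGen (m+1))) :
    pil k m (RingQuot.mkAlgHom k (PGen.PRel k (m+1)) w) = plF k m w := by
  unfold pil; exact RingQuot.liftAlgHom_mkAlgHom_apply (S := k) (plF k m) (plF_resp k m) w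

lemma pil_e (v : Fin (m+2)) : pil k m (eP k (m+1) v) =
    if h : (v : ℕ) < m + 1 then eP k m ⟨(v:ℕ), h⟩ else 0 := by
  rw [eP, pil_mk, plF_e]

lemma pil_x (a : Fin (m+1)) : pil k m (xP k (m+1) a) =
    if h : (a : ℕ) < m then xP k m ⟨(a:ℕ), h⟩ else 0 := by
  rw [xP, pil_mk, plF_x]

lemma pil_y (a : Fin (m+1)) : pil k m (yP k (m+1) a) =
    if h : (a : ℕ) < m then yP k m ⟨(a:ℕ), h⟩ else 0 := by
  rw [yP, pil_mk, plF_y]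

lemma pil_ecast (i : Fin (m+1)) : pil k m (eP k (m+1) i.castSucc) = eP k m i := by
  rw [pil_e, dif_pos (by simp <;> omega)]; congr 1 <;> simp [Fin.ext_iff]

lemma pil_elast : pil k m (eP k (m+1) (Fin.last (m+1))) = 0 := by
  rw [pil_e, dif_neg (by rw [Fin.val_last]; omega)]

lemma pil_xcast (i : Fin m) : pil k m (xP k (m+1) i.castSucc) = xP k m i := by
  rw [pil_x, dif_pos (by simp)]; congr 1 <;> simp [Fin.ext_iff]

lemma pil_xlast : pil k m (xP k (m+1) (Fin.last m)) = 0 := by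
  rw [pil_x, dif_neg (by rw [Fin.val_last]; omega)]

lemma pil_ycast (i : Fin m) : pil k m (yP k (m+1) i.castSucc) = yP k m i := by
  rw [pil_y, dif_pos (by simp)]; congr 1 <;> simp [Fin.ext_iff]

lemma pil_ylast : pil k m (yP k (m+1) (Fin.last m)) = 0 := by
  rw [pil_y, dif_neg (by rw [Fin.val_last]; omega)]

end Stmt16
namespace Stmt16

open PGen

variable {k : Type} [Field k] {N : ℕ}

lemma e0_kill' (z w : PiA k N) : eP k N 0 * (z * (w * YP k N)) = 0 := by
  have h : eP k N 0 * (z * (w * YP k N)) = eP k N 0 * (z * w) * YP k N := by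
    simp only [mul_assoc]
  rw [h, e0_mul_mul_Y]

variable (k) (m : ℕ)

/-! ### The algebra map `σ` killing the arrows `y` -/

noncomputable def sgGen : PGen (m+1) → PiA k (m+1)
  | .e v => eP k (m+1) v
  | .x a => xP k (m+1) a
  | .y _ => 0

noncomputable def sgF : FreeAlgebra k (PGen (m+1)) →ₐ[k] PiA k (m+1) :=
  FreeAlgebra.lift k (sgGen k m)

lemma sgF_e (v : Fin (m+2)) : sgF k m (FreeAlgebra.ι k (PGen.e v)) = eP k (m+1) v := by
  simp [sgF, sgGen]

lemma sgF_x (a : Fin (m+1)) : sgF k m (FreeAlgebra.ι k (PGen.x a)) = xP k (m+1) a := by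
  simp [sgF, sgGen]

lemma sgF_y (a : Fin (m+1)) : sgF k m (FreeAlgebra.ι k (PGen.y a)) = 0 := by
  simp [sgF, sgGen]

lemma sgF_resp : ∀ ⦃u v : FreeAlgebra k (PGen (m+1))⦄, PGen.PRel k (m+1) u v →
    sgF k m u = sgF k m v := by
  intro u v h
  cases h with
  | sum => rw [map_sum, map_one]; simp only [sgF_e]; exact sum_e
  | idem i => rw [map_mul, sgF_e]; exact ee_same i
  | orth i j hij => rw [map_mul, map_zero, sgF_e, sgF_e]; exact ee_ne hij
  | xsrc i => rw [map_mul, sgF_e, sgF_x]; exact ex i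
  | xtgt i => rw [map_mul, sgF_e, sgF_x]; exact xe i
  | ysrc i => simp only [map_mul, sgF_e, sgF_y, mul_zero]
  | ytgt i => simp only [map_mul, sgF_e, sgF_y, zero_mul]
  | bdry0 i h0 => simp only [map_mul, map_zero, sgF_y, mul_zero]
  | middle i j hij => simp only [map_mul, sgF_x, sgF_y, mul_zero, zero_mul]
  | bdryN i hN => simp only [map_mul, map_zero, sgF_y, zero_mul]

/-- `σ : Π_{m+2} → Π_{m+2}`, killing all `y` arrows. -/
noncomputable def sg : PiA k (m+1) →ₐ[k] PiA k (m+1) :=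
  RingQuot.liftAlgHom k ⟨sgF k m, sgF_resp k m⟩

lemma sg_mk (w : FreeAlgebra k (PGen (m+1))) :
    sg k m (RingQuot.mkAlgHom k (PGen.PRel k (m+1)) w) = sgF k m w := by
  unfold sg; exact RingQuot.liftAlgHom_mkAlgHom_apply (S := k) (sgF k m) (sgF_resp k m) w

lemma sg_y (a : Fin (m+1)) : sg k m (yP k (m+1) a) = 0 := by
  rw [yP, sg_mk, sgF_y]

/-! ### The shift-up map `L` out of the free algebra -/

noncomputable def LGen : PGen m → PiA k (m+1)
  | .e v => eP k (m+1) v.succ + (if v = 0 then eP k (m+1) 0 else 0)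
  | .x a => xP k (m+1) a.succ
  | .y a => yP k (m+1) a.succ

noncomputable def LF : FreeAlgebra k (PGen m) →ₐ[k] PiA k (m+1) :=
  FreeAlgebra.lift k (LGen k m)

lemma LF_e (v : Fin (m+1)) : LF k m (FreeAlgebra.ι k (PGen.e v)) =
    eP k (m+1) v.succ + (if v = 0 then eP k (m+1) 0 else 0) := by
  simp [LF, LGen]

lemma LF_x (a : Fin m) : LF k m (FreeAlgebra.ι k (PGen.x a)) = xP k (m+1) a.succ := by
  simp [LF, LGen]

lemma LF_y (a : Fin m) : LF k m (FreeAlgebra.ι k (PGen.y a)) = yP k (m+1) a.succ := by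
  simp [LF, LGen]

lemma LF_sum : LF k m (∑ i : Fin (m+1), FreeAlgebra.ι k (PGen.e i)) = 1 := by
  rw [map_sum]
  simp only [LF_e]
  rw [Finset.sum_add_distrib,
    Finset.sum_ite_eq' Finset.univ (0 : Fin (m+1)) (fun _ => eP k (m+1) 0),
    ← sum_e (k := k) (N := m+1),
    Fin.sum_univ_succ (f := fun v : Fin (m+2) => eP k (m+1) v)]
  simp only [Finset.mem_univ, if_true]
  exact add_comm _ _

lemma LF_e_mul_Y (v : Fin (m+1)) :
    LF k m (FreeAlgebra.ι k (PGen.e v)) * YP k (m+1) = yP k (m+1) v := by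
  rw [LF_e, add_mul, e_mul_Y]
  split
  · rw [e0_mul_Y, add_zero]
  · rw [zero_mul, add_zero]

/-- Core compatibility: `L u · L w · Y` only depends on the class of `u`. -/
lemma LY_resp : ∀ ⦃u v : FreeAlgebra k (PGen m)⦄, RingQuot.Rel (PGen.PRel k m) u v →
    ∀ w : FreeAlgebra k (PGen m),
      LF k m u * (LF k m w * YP k (m+1)) = LF k m v * (LF k m w * YP k (m+1)) := by
  intro u v h
  induction h with
  | of hr =>
    intro w
    cases hr with
    | sum => rw [LF_sum, map_one]
    | idem i =>
      have : LF k m (FreeAlgebra.ι k (PGen.e i) * FreeAlgebra.ι k (PGen.e i)) =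
          LF k m (FreeAlgebra.ι k (PGen.e i)) := by
        rw [map_mul, LF_e]
        by_cases h0 : i = 0
        · rw [if_pos h0, add_mul, mul_add, mul_add, ee_same, eev_ne (by simp),
            eev_ne (by simp), ee_same]
          simp
        · rw [if_neg h0, add_zero, ee_same]
      rw [this]
    | orth i j hij =>
      have hvij : (i : ℕ) ≠ (j : ℕ) := fun hh => hij (Fin.ext hh)
      have : LF k m (FreeAlgebra.ι k (PGen.e i) * FreeAlgebra.ι k (PGen.e j)) = 0 := by
        rw [map_mul, LF_e, LF_e, add_mul, mul_add, mul_add,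
          eev_ne (show ((i.succ : Fin (m+2)) : ℕ) ≠ ((j.succ : Fin (m+2)) : ℕ) by
            simp only [Fin.val_succ]; omega)]
        by_cases hi0 : i = 0
        · rw [if_pos hi0]
          have hj0 : ¬ j = 0 := fun hh => hij (hi0.trans hh.symm)
          rw [if_neg hj0, eev_ne (show ((0 : Fin (m+2)) : ℕ) ≠ ((j.succ : Fin (m+2)) : ℕ) by
            simp [Fin.val_succ])]
          simp
        · rw [if_neg hi0]
          by_cases hj0 : j = 0
          · rw [if_pos hj0, eev_ne (show ((i.succ : Fin (m+2)) : ℕ) ≠ ((0 : Fin (m+2)) : ℕ) by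
              simp [Fin.val_succ])]
            simp
          · rw [if_neg hj0]
            simp
      rw [this, map_zero]
    | xsrc i =>
      have : LF k m (FreeAlgebra.ι k (PGen.e i.castSucc) * FreeAlgebra.ι k (PGen.x i)) =
          LF k m (FreeAlgebra.ι k (PGen.x i)) := by
        rw [map_mul, LF_e, LF_x, add_mul, exv (by simp)]
        split
        · rw [exv_ne (by simp), add_zero]
        · rw [zero_mul, add_zero]
      rw [this]
    | xtgt i =>
      have : LF k m (FreeAlgebra.ι k (PGen.x i) * FreeAlgebra.ι k (PGen.e i.succ)) =
          LF k m (FreeAlgebra.ι k (PGen.x i)) := by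
        rw [map_mul, LF_e, LF_x, mul_add, if_neg (Fin.succ_ne_zero i), mul_zero, add_zero,
          xev (by simp)]
      rw [this]
    | ysrc i =>
      have : LF k m (FreeAlgebra.ι k (PGen.e i.succ) * FreeAlgebra.ι k (PGen.y i)) =
          LF k m (FreeAlgebra.ι k (PGen.y i)) := by
        rw [map_mul, LF_e, LF_y, add_mul, if_neg (Fin.succ_ne_zero i), zero_mul, add_zero,
          eyv (by simp)]
      rw [this]
    | ytgt i =>
      have : LF k m (FreeAlgebra.ι k (PGen.y i) * FreeAlgebra.ι k (PGen.e i.castSucc)) =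
          LF k m (FreeAlgebra.ι k (PGen.y i)) := by
        rw [map_mul, LF_e, LF_y, mul_add, yev (by simp)]
        split
        · rw [yev_ne (by simp), add_zero]
        · rw [mul_zero, add_zero]
      rw [this]
    | middle i j hij =>
      have : LF k m (FreeAlgebra.ι k (PGen.x j) * FreeAlgebra.ι k (PGen.y j)) =
          LF k m (FreeAlgebra.ι k (PGen.y i) * FreeAlgebra.ι k (PGen.x i)) := by
        rw [map_mul, map_mul, LF_x, LF_y, LF_x, LF_y]
        exact xym i.succ j.succ (by simp only [Fin.val_succ]; omega)
      rw [this]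
    | bdryN i hN =>
      have : LF k m (FreeAlgebra.ι k (PGen.y i) * FreeAlgebra.ι k (PGen.x i)) = 0 := by
        rw [map_mul, LF_x, LF_y]
        exact yxN i.succ (by simp only [Fin.val_succ]; omega)
      rw [this, map_zero]
    | bdry0 i h0 =>
      rw [map_zero, zero_mul, map_mul, LF_x, LF_y]
      rw [xym (Fin.castSucc i) (Fin.succ i) (by simp)]
      rw [← yev (a := Fin.castSucc i) (v := (0 : Fin (m+2))) (by simp [h0])]
      have hgoal : yP k (m+1) (Fin.castSucc i) * eP k (m+1) 0 * xP k (m+1) (Fin.castSucc i) *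
          (LF k m w * YP k (m+1)) = 0 := by
        simp only [mul_assoc]
        rw [e0_kill', mul_zero]
      exact hgoal
  | @add_left a b c h ih =>
    intro w
    rw [map_add, map_add, add_mul, add_mul, ih w]
  | @mul_left a b c h ih =>
    intro w
    rw [map_mul, map_mul, mul_assoc, mul_assoc]
    have hc : LF k m c * (LF k m w * YP k (m+1)) = LF k m (c * w) * YP k (m+1) := by
      rw [map_mul, mul_assoc]
    rw [hc]
    exact ih (c * w)
  | @mul_right a b c h ih =>
    intro w
    rw [map_mul, map_mul, mul_assoc, mul_assoc, ih w]

end Stmt16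
namespace Stmt16

open PGen

variable {k : Type} [Field k] {N : ℕ}

lemma e0_kill (z : PiA k N) : eP k N 0 * (z * YP k N) = 0 := by
  have h := e0_mul_mul_Y (k := k) (N := N) z
  rwa [mul_assoc] at h

variable (k) (m : ℕ)

/-! ### The embedding `f` -/

noncomputable def f0 : PiA k m → PiA k (m+1) := fun b =>
  Quot.liftOn (RingQuot.toQuot (b : RingQuot (PGen.PRel k m)))
    (fun w => LF k m w * YP k (m+1))
    (fun a b h => by simpa using LY_resp (k := k) (m := m) h 1)

lemma f0_mk (w : FreeAlgebra k (PGen m)) :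
    f0 k m (mkP k m w) = LF k m w * YP k (m+1) := by
  show f0 k m (RingQuot.mkAlgHom k (PGen.PRel k m) w) = _
  simp only [RingQuot.mkAlgHom_def, RingQuot.mkRingHom_def]
  rfl

lemma f0_add (u v : PiA k m) : f0 k m (u + v) = f0 k m u + f0 k m v := by
  obtain ⟨wu, rfl⟩ := mkP_surjective u
  obtain ⟨wv, rfl⟩ := mkP_surjective v
  rw [← map_add, f0_mk, f0_mk, f0_mk, map_add, add_mul]

lemma f0_smul (c : k) (u : PiA k m) : f0 k m (c • u) = c • f0 k m u := by
  obtain ⟨wu, rfl⟩ := mkP_surjective u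
  rw [← map_smul, f0_mk, f0_mk, map_smul, smul_mul_assoc]

/-- The embedding `f` as a linear map. -/
noncomputable def fL : PiA k m →ₗ[k] PiA k (m+1) where
  toFun := f0 k m
  map_add' := f0_add k m
  map_smul' := f0_smul k m

lemma fL_mk (w : FreeAlgebra k (PGen m)) :
    fL k m (mkP k m w) = LF k m w * YP k (m+1) := f0_mk k m w

lemma fL_e (i : Fin (m+1)) : fL k m (eP k m i) = yP k (m+1) i := by
  have h : eP k m i = mkP k m (FreeAlgebra.ι k (PGen.e i)) := rfl
  rw [h, fL_mk, LF_e_mul_Y]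

-- product absorption into `mkP`
lemma e_mul_mk (j : Fin (m+1)) (ω : FreeAlgebra k (PGen m)) :
    eP k m j * mkP k m ω = mkP k m (FreeAlgebra.ι k (PGen.e j) * ω) := by
  rw [map_mul]; rfl

lemma x_mul_mk (j : Fin m) (ω : FreeAlgebra k (PGen m)) :
    xP k m j * mkP k m ω = mkP k m (FreeAlgebra.ι k (PGen.x j) * ω) := by
  rw [map_mul]; rfl

lemma y_mul_mk (j : Fin m) (ω : FreeAlgebra k (PGen m)) :
    yP k m j * mkP k m ω = mkP k m (FreeAlgebra.ι k (PGen.y j) * ω) := by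
  rw [map_mul]; rfl

lemma mk_mul_e (j : Fin (m+1)) (ω : FreeAlgebra k (PGen m)) :
    mkP k m ω * eP k m j = mkP k m (ω * FreeAlgebra.ι k (PGen.e j)) := by
  rw [map_mul]; rfl

lemma mk_mul_x (j : Fin m) (ω : FreeAlgebra k (PGen m)) :
    mkP k m ω * xP k m j = mkP k m (ω * FreeAlgebra.ι k (PGen.x j)) := by
  rw [map_mul]; rfl

lemma mk_mul_y (j : Fin m) (ω : FreeAlgebra k (PGen m)) :
    mkP k m ω * yP k m j = mkP k m (ω * FreeAlgebra.ι k (PGen.y j)) := by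
  rw [map_mul]; rfl

/-! ### `f` intertwines the left module structures -/

lemma fL_mul_left (a : PiA k (m+1)) (u : PiA k m) :
    fL k m (pir k m a * u) = a * fL k m u := by
  obtain ⟨α, rfl⟩ := RingQuot.mkAlgHom_surjective k (PGen.PRel k (m+1)) a
  induction α using FreeAlgebra.induction generalizing u with
  | grade0 r =>
    rw [AlgHom.commutes]
    have h1 : (algebraMap k (RingQuot (PGen.PRel k (m+1))) r) =
        algebraMap k (PiA k (m+1)) r := rfl
    rw [h1, AlgHom.commutes, ← Algebra.smul_def, ← Algebra.smul_def, map_smul]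
  | add α β ihα ihβ =>
    have hA : RingQuot.mkAlgHom k (PGen.PRel k (m+1)) (α + β) =
        @HAdd.hAdd (PiA k (m+1)) (PiA k (m+1)) (PiA k (m+1)) _
          (RingQuot.mkAlgHom k _ α) (RingQuot.mkAlgHom k _ β) := map_add _ _ _
    rw [hA]; erw [map_add (pir k m), add_mul, add_mul, map_add (fL k m), ihα u, ihβ u]
  | mul α β ihα ihβ =>
    have h1 : RingQuot.mkAlgHom k (PGen.PRel k (m+1)) (α * β) =
        @HMul.hMul (PiA k (m+1)) (PiA k (m+1)) (PiA k (m+1)) _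
          (RingQuot.mkAlgHom k _ α) (RingQuot.mkAlgHom k _ β) := map_mul _ _ _
    rw [h1]; erw [map_mul (pir k m), mul_assoc, mul_assoc,
      ihα (pir k m (RingQuot.mkAlgHom k _ β) * u), ihβ u]
  | grade1 g =>
    obtain ⟨ω, rfl⟩ := mkP_surjective u
    cases g with
    | e v =>
      show fL k m (pir k m (eP k (m+1) v) * mkP k m ω) =
        eP k (m+1) v * fL k m (mkP k m ω)
      rw [pir_e, fL_mk]
      by_cases hv : 0 < (v : ℕ)
      · rw [dif_pos hv, e_mul_mk, fL_mk, map_mul, LF_e]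
        simp only [add_mul, mul_assoc]
        have hsucc : (⟨(v:ℕ)-1, by have := v.isLt; omega⟩ : Fin (m+1)).succ = v := by
          simp only [Fin.ext_iff, Fin.val_succ]; omega
        rw [hsucc]
        split
        · rw [e0_kill, add_zero]
        · rw [zero_mul, add_zero]
      · rw [dif_neg hv, zero_mul, map_zero]
        have hv0 : v = 0 := by simp only [Fin.ext_iff, Fin.val_zero]; omega
        rw [hv0, e0_kill]
    | x a =>
      show fL k m (pir k m (xP k (m+1) a) * mkP k m ω) =
        xP k (m+1) a * fL k m (mkP k m ω)
      rw [pir_x, fL_mk]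
      by_cases ha : 0 < (a : ℕ)
      · rw [dif_pos ha, x_mul_mk, fL_mk, map_mul, LF_x]
        simp only [mul_assoc]
        have hsucc : (⟨(a:ℕ)-1, by have := a.isLt; omega⟩ : Fin m).succ = a := by
          simp only [Fin.ext_iff, Fin.val_succ]; omega
        rw [hsucc]
      · rw [dif_neg ha, zero_mul, map_zero]
        have ha0 : a = 0 := by simp only [Fin.ext_iff, Fin.val_zero]; omega
        subst ha0
        rw [← ex (k := k) (N := m+1) 0]
        have hc : Fin.castSucc (0 : Fin (m+1)) = (0 : Fin (m+2)) := rfl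
        rw [hc]
        simp only [mul_assoc]
        rw [e0_kill']
    | y a =>
      show fL k m (pir k m (yP k (m+1) a) * mkP k m ω) =
        yP k (m+1) a * fL k m (mkP k m ω)
      rw [pir_y, fL_mk]
      by_cases ha : 0 < (a : ℕ)
      · rw [dif_pos ha, y_mul_mk, fL_mk, map_mul, LF_y]
        simp only [mul_assoc]
        have hsucc : (⟨(a:ℕ)-1, by have := a.isLt; omega⟩ : Fin m).succ = a := by
          simp only [Fin.ext_iff, Fin.val_succ]; omega
        rw [hsucc]
      · rw [dif_neg ha, zero_mul, map_zero]
        have ha0 : a = 0 := by simp only [Fin.ext_iff, Fin.val_zero]; omega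
        subst ha0
        rw [← yev (k := k) (N := m+1) (a := 0) (v := (0 : Fin (m+2))) (by simp)]
        simp only [mul_assoc]
        rw [e0_kill, mul_zero]

/-! ### `f` intertwines the right module structures -/

lemma fL_mul_right (b : PiA k (m+1)) (u : PiA k m) :
    fL k m (u * pil k m b) = fL k m u * b := by
  obtain ⟨β, rfl⟩ := RingQuot.mkAlgHom_surjective k (PGen.PRel k (m+1)) b
  induction β using FreeAlgebra.induction generalizing u with
  | grade0 r =>
    rw [AlgHom.commutes]
    have h1 : (algebraMap k (RingQuot (PGen.PRel k (m+1))) r) =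
        algebraMap k (PiA k (m+1)) r := rfl
    rw [h1, AlgHom.commutes, ← Algebra.commutes r (fL k m u), ← Algebra.smul_def,
      ← Algebra.commutes r u, ← Algebra.smul_def, map_smul]
  | add α β ihα ihβ =>
    have hA : RingQuot.mkAlgHom k (PGen.PRel k (m+1)) (α + β) =
        @HAdd.hAdd (PiA k (m+1)) (PiA k (m+1)) (PiA k (m+1)) _
          (RingQuot.mkAlgHom k _ α) (RingQuot.mkAlgHom k _ β) := map_add _ _ _
    rw [hA]; erw [map_add (pil k m), mul_add, mul_add, map_add (fL k m), ihα u, ihβ u]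
  | mul α β ihα ihβ =>
    have h1 : RingQuot.mkAlgHom k (PGen.PRel k (m+1)) (α * β) =
        @HMul.hMul (PiA k (m+1)) (PiA k (m+1)) (PiA k (m+1)) _
          (RingQuot.mkAlgHom k _ α) (RingQuot.mkAlgHom k _ β) := map_mul _ _ _
    rw [h1]; erw [map_mul (pil k m), ← mul_assoc, ← mul_assoc,
      ihβ (u * pil k m (RingQuot.mkAlgHom k _ α)), ihα u]
  | grade1 g =>
    obtain ⟨ω, rfl⟩ := mkP_surjective u
    cases g with
    | e v =>
      show fL k m (mkP k m ω * pil k m (eP k (m+1) v)) =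
        fL k m (mkP k m ω) * eP k (m+1) v
      rw [pil_e, fL_mk]
      by_cases hv : (v : ℕ) < m + 1
      · rw [dif_pos hv, mk_mul_e, fL_mk, map_mul, mul_assoc, LF_e_mul_Y, mul_assoc]
        have h2 := Y_mul_e (k := k) (N := m+1) ⟨(v:ℕ), hv⟩
        rw [show Fin.castSucc (⟨(v:ℕ), hv⟩ : Fin (m+1)) = v from by
          simp [Fin.ext_iff]] at h2
        rw [h2]
      · rw [dif_neg hv, mul_zero, map_zero]
        have hlast : v = Fin.last (m+1) := by
          simp only [Fin.ext_iff, Fin.val_last]; have := v.isLt; omega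
        rw [hlast, mul_assoc, Y_mul_elast, mul_zero]
    | x a =>
      show fL k m (mkP k m ω * pil k m (xP k (m+1) a)) =
        fL k m (mkP k m ω) * xP k (m+1) a
      rw [pil_x, fL_mk]
      by_cases ha : (a : ℕ) < m
      · rw [dif_pos ha, mk_mul_x, fL_mk, map_mul, mul_assoc, mul_assoc, Y_mul_x]
        have h1 : LF k m (FreeAlgebra.ι k (PGen.x ⟨(a:ℕ), ha⟩)) * YP k (m+1) =
            yP k (m+1) a * xP k (m+1) a := by
          rw [LF_x, x_mul_Y]
          exact xym a ((⟨(a:ℕ), ha⟩ : Fin m).succ) (by simp)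
        rw [h1]
      · rw [dif_neg ha, mul_zero, map_zero]
        rw [mul_assoc, Y_mul_x, yxN _ (by have := a.isLt; omega), mul_zero]
    | y a =>
      show fL k m (mkP k m ω * pil k m (yP k (m+1) a)) =
        fL k m (mkP k m ω) * yP k (m+1) a
      rw [pil_y, fL_mk]
      by_cases ha : (a : ℕ) < m
      · rw [dif_pos ha, mk_mul_y, fL_mk, map_mul, LF_y, mul_assoc, mul_assoc]
        have h1 : yP k (m+1) (⟨(a:ℕ), ha⟩ : Fin m).succ * YP k (m+1) =
            YP k (m+1) * yP k (m+1) a := by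
          rw [y_mul_Y _ a (by simp), Y_mul_y a ((⟨(a:ℕ), ha⟩ : Fin m).succ) (by simp)]
        rw [h1]
      · rw [dif_neg ha, mul_zero, map_zero]
        rw [mul_assoc, Y_mul_ylast a (by have := a.isLt; omega), mul_zero]

/-- The bimodule property of `f`. -/
lemma fL_bimod (a b : PiA k (m+1)) (u : PiA k m) :
    fL k m (pir k m a * u * pil k m b) = a * fL k m u * b := by
  rw [mul_assoc, fL_mul_left, fL_mul_right, mul_assoc]

end Stmt16
namespace Stmt16

open PGen Polynomial

variable (k : Type) [Field k] (m : ℕ)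

abbrev Pol := Polynomial (PiA k m)
abbrev M2 := Matrix (Fin 2) (Fin 2) (Pol k m)

noncomputable def HGen : PGen (m+1) → M2 k m
  | .e v => !![C (pir k m (eP k (m+1) v)), 0; 0, C (pil k m (eP k (m+1) v))]
  | .x a => !![C (pir k m (xP k (m+1) a)), 0; 0, C (pil k m (xP k (m+1) a))]
  | .y a => !![C (pir k m (yP k (m+1) a)) * X, C (eP k m a); 0, C (pil k m (yP k (m+1) a))]

noncomputable def HF : FreeAlgebra k (PGen (m+1)) →ₐ[k] M2 k m :=
  FreeAlgebra.lift k (HGen k m)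

lemma HF_e (v : Fin (m+2)) : HF k m (FreeAlgebra.ι k (PGen.e v)) =
    !![C (pir k m (eP k (m+1) v)), 0; 0, C (pil k m (eP k (m+1) v))] := by
  simp [HF, HGen]

lemma HF_x (a : Fin (m+1)) : HF k m (FreeAlgebra.ι k (PGen.x a)) =
    !![C (pir k m (xP k (m+1) a)), 0; 0, C (pil k m (xP k (m+1) a))] := by
  simp [HF, HGen]

lemma HF_y (a : Fin (m+1)) : HF k m (FreeAlgebra.ι k (PGen.y a)) =
    !![C (pir k m (yP k (m+1) a)) * X, C (eP k m a); 0, C (pil k m (yP k (m+1) a))] := by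
  simp [HF, HGen]

lemma fin2_sum {α : Type} [AddCommMonoid α] {n : ℕ} (a b c d : Fin n → α) :
    (∑ i : Fin n, !![a i, b i; c i, d i]) =
      !![∑ i, a i, ∑ i, b i; ∑ i, c i, ∑ i, d i] := by
  ext i j
  fin_cases i <;> fin_cases j <;>
    simp [Matrix.sum_apply]

lemma fin2_zero {α : Type} [AddCommMonoid α] :
    (0 : Matrix (Fin 2) (Fin 2) α) = !![0, 0; 0, 0] := by
  ext i j
  fin_cases i <;> fin_cases j <;> simp

lemma HF_resp : ∀ ⦃u v : FreeAlgebra k (PGen (m+1))⦄, PGen.PRel k (m+1) u v →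
    HF k m u = HF k m v := by
  intro u v h
  have hCX : ∀ (a b : PiA k m), C a * (C b * X) = C (a * b) * X := fun a b => by
    rw [← mul_assoc, ← map_mul]
  have hXC : ∀ (a b : PiA k m), (C a * X) * C b = C (a * b) * X := fun a b => by
    rw [mul_assoc, Polynomial.X_mul, ← mul_assoc, ← map_mul]
  cases h with
  | sum =>
    rw [map_sum, map_one]
    simp only [HF_e]
    rw [fin2_sum, Matrix.one_fin_two]
    rw [show (∑ i : Fin (m+2), C (pir k m (eP k (m+1) i))) = 1 by
      rw [← map_sum, ← map_sum, sum_e, map_one, map_one]]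
    rw [show (∑ i : Fin (m+2), C (pil k m (eP k (m+1) i))) = 1 by
      rw [← map_sum, ← map_sum, sum_e, map_one, map_one]]
    simp
  | idem i =>
    rw [map_mul, HF_e, Matrix.mul_fin_two]
    simp only [mul_zero, zero_mul, add_zero, zero_add]
    rw [← map_mul, ← map_mul, ← map_mul, ← map_mul, ee_same]
  | orth i j hij =>
    rw [map_mul, map_zero, HF_e, HF_e, Matrix.mul_fin_two, fin2_zero]
    simp only [mul_zero, zero_mul, add_zero, zero_add]
    rw [← map_mul, ← map_mul, ← map_mul, ← map_mul, ee_ne hij]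
    simp
  | xsrc i =>
    rw [map_mul, HF_e, HF_x, Matrix.mul_fin_two]
    simp only [mul_zero, zero_mul, add_zero, zero_add]
    rw [← map_mul, ← map_mul, ← map_mul, ← map_mul, ex]
  | xtgt i =>
    rw [map_mul, HF_e, HF_x, Matrix.mul_fin_two]
    simp only [mul_zero, zero_mul, add_zero, zero_add]
    rw [← map_mul, ← map_mul, ← map_mul, ← map_mul, xe]
  | ysrc i =>
    rw [map_mul, HF_e, HF_y, Matrix.mul_fin_two]
    simp only [mul_zero, zero_mul, add_zero, zero_add]
    rw [hCX]
    simp only [← map_mul]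
    rw [ey, pir_esucc, ee_same]
  | ytgt i =>
    rw [map_mul, HF_y, HF_e, Matrix.mul_fin_two]
    simp only [mul_zero, zero_mul, add_zero, zero_add]
    rw [hXC]
    simp only [← map_mul]
    rw [ye, pil_ecast, ee_same]
  | bdry0 i h0 =>
    rw [map_mul, map_zero, HF_x, HF_y, Matrix.mul_fin_two, fin2_zero]
    simp only [mul_zero, zero_mul, add_zero, zero_add]
    rw [hCX]
    simp only [← map_mul]
    rw [xy0 i h0, pir_x, dif_neg (by omega)]
    simp
  | middle i j hij =>
    rw [map_mul, map_mul, HF_x, HF_y, HF_x, HF_y, Matrix.mul_fin_two, Matrix.mul_fin_two]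
    simp only [mul_zero, zero_mul, add_zero, zero_add]
    rw [hCX, hXC]
    simp only [← map_mul]
    rw [xym i j hij]
    have him : (i : ℕ) < m := by have := j.isLt; omega
    have h1 : pir k m (xP k (m+1) j) = xP k m ⟨(i:ℕ), him⟩ := by
      rw [pir_x, dif_pos (by omega)]
      congr 1 <;> simp [Fin.ext_iff] <;> omega
    have h2 : pil k m (xP k (m+1) i) = xP k m ⟨(i:ℕ), him⟩ := by
      rw [pil_x, dif_pos him]
    have hcorner : pir k m (xP k (m+1) j) * eP k m j = eP k m i * pil k m (xP k (m+1) i) := by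
      rw [h1, h2, xev (show (j:ℕ) = (i:ℕ) + 1 by omega),
        exv (show (i:ℕ) = (i:ℕ) from rfl)]
    rw [hcorner]
  | bdryN i hN =>
    rw [map_mul, map_zero, HF_x, HF_y, Matrix.mul_fin_two, fin2_zero]
    simp only [mul_zero, zero_mul, add_zero, zero_add]
    rw [hXC]
    simp only [← map_mul]
    rw [yxN i hN, pil_x, dif_neg (by omega)]
    simp

/-- The representation `H` of `Π_{m+2}` by `2×2` triangular matrices. -/
noncomputable def HP : PiA k (m+1) →ₐ[k] M2 k m :=
  RingQuot.liftAlgHom k ⟨HF k m, HF_resp k m⟩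

lemma HP_mk (w : FreeAlgebra k (PGen (m+1))) :
    HP k m (RingQuot.mkAlgHom k (PGen.PRel k (m+1)) w) = HF k m w := by
  unfold HP; exact RingQuot.liftAlgHom_mkAlgHom_apply (S := k) (HF k m) (HF_resp k m) w

lemma HP_e (v : Fin (m+2)) : HP k m (eP k (m+1) v) =
    !![C (pir k m (eP k (m+1) v)), 0; 0, C (pil k m (eP k (m+1) v))] := by
  rw [eP, HP_mk, HF_e]
  rfl

lemma HP_x (a : Fin (m+1)) : HP k m (xP k (m+1) a) =
    !![C (pir k m (xP k (m+1) a)), 0; 0, C (pil k m (xP k (m+1) a))] := by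
  rw [xP, HP_mk, HF_x]
  rfl

lemma HP_y (a : Fin (m+1)) : HP k m (yP k (m+1) a) =
    !![C (pir k m (yP k (m+1) a)) * X, C (eP k m a); 0, C (pil k m (yP k (m+1) a))] := by
  rw [yP, HP_mk, HF_y]
  rfl

end Stmt16
namespace Stmt16

open PGen Polynomial

variable (k : Type) [Field k] (m : ℕ)

lemma pir_Y : pir k m (YP k (m+1)) = YP k m := by
  rw [YP, map_sum, Fin.sum_univ_succ, pir_y0, zero_add, YP]
  exact Finset.sum_congr rfl fun i _ => pir_ysucc k m i

lemma pil_Y : pil k m (YP k (m+1)) = YP k m := by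
  rw [YP, map_sum, Fin.sum_univ_castSucc, pil_ylast, add_zero, YP]
  exact Finset.sum_congr rfl fun i _ => pil_ycast k m i

-- entry helpers
lemma lit00 {α : Type} (a b c d : α) : (!![a, b; c, d]) 0 0 = a := rfl
lemma lit01 {α : Type} (a b c d : α) : (!![a, b; c, d]) 0 1 = b := rfl
lemma lit10 {α : Type} (a b c d : α) : (!![a, b; c, d]) 1 0 = c := rfl
lemma lit11 {α : Type} (a b c d : α) : (!![a, b; c, d]) 1 1 = d := rfl

lemma mul_entry (P Q : M2 k m) (i j : Fin 2) :
    (P * Q) i j = P i 0 * Q 0 j + P i 1 * Q 1 j := by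
  rw [Matrix.mul_apply, Fin.sum_univ_two]

lemma YP_zero : YP k 0 = 0 := by
  rw [YP]
  exact Finset.sum_of_isEmpty _

/-! ### Claim Q: `πℓ(L ω) · Y_B = Y_B · ω` -/

lemma claimQ : ∀ ω : FreeAlgebra k (PGen m),
    pil k m (LF k m ω) * YP k m = YP k m * mkP k m ω := by
  intro ω
  induction ω using FreeAlgebra.induction with
  | grade0 r =>
    rw [AlgHom.commutes, AlgHom.commutes, AlgHom.commutes, ← Algebra.commutes]
  | add α β ihα ihβ =>
    rw [map_add, map_add, map_add, add_mul, mul_add, ihα, ihβ]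
  | mul α β ihα ihβ =>
    rw [map_mul (LF k m), map_mul (pil k m), map_mul (mkP k m), mul_assoc, ihβ,
      ← mul_assoc, ihα, mul_assoc]
  | grade1 g =>
    cases g with
    | e v =>
      rw [LF_e, map_add]
      have hRHS : mkP k m (FreeAlgebra.ι k (PGen.e v)) = eP k m v := rfl
      rw [hRHS]
      by_cases hv : (v : ℕ) < m
      · have h1 : pil k m (eP k (m+1) (v.succ)) = eP k m ⟨(v:ℕ)+1, by omega⟩ := by
          rw [pil_e, dif_pos (by simp only [Fin.val_succ]; omega)]
          congr 1 <;> simp [Fin.ext_iff]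
        have h2 : eP k m ⟨(v:ℕ)+1, by omega⟩ * YP k m = yP k m ⟨(v:ℕ), hv⟩ := by
          rw [show (⟨(v:ℕ)+1, by omega⟩ : Fin (m+1)) = (⟨(v:ℕ), hv⟩ : Fin m).succ from by
            simp [Fin.ext_iff], e_mul_Y]
        have h3 := Y_mul_e (k := k) (N := m) ⟨(v:ℕ), hv⟩
        rw [show Fin.castSucc (⟨(v:ℕ), hv⟩ : Fin m) = v from by simp [Fin.ext_iff]] at h3
        rw [h1, h3, add_mul, h2]
        split
        · rw [show pil k m (eP k (m+1) 0) = eP k m 0 from by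
            rw [pil_e, dif_pos (by simp)]; congr 1 <;> simp [Fin.ext_iff]]
          rw [e0_mul_Y, add_zero]
        · rw [map_zero, zero_mul, add_zero]
      · have hvm : (v : ℕ) = m := by have := v.isLt; omega
        have h1 : pil k m (eP k (m+1) (v.succ)) = 0 := by
          rw [pil_e, dif_neg (by simp only [Fin.val_succ]; omega)]
        rw [h1, zero_add]
        by_cases hm : v = 0
        · -- then m = 0
          subst hm
          have hm0 : m = 0 := by simpa using hvm.symm
          subst hm0
          rw [if_pos rfl, YP_zero, mul_zero, zero_mul]
        · rw [if_neg hm, map_zero, zero_mul]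
          have h3 := Y_mul_elast (k := k) (N := m)
          rw [show Fin.last m = v from by simp [Fin.ext_iff]; omega] at h3
          rw [h3]
    | x a =>
      rw [LF_x]
      have hRHS : mkP k m (FreeAlgebra.ι k (PGen.x a)) = xP k m a := rfl
      rw [hRHS, Y_mul_x]
      by_cases ha : (a : ℕ) + 1 < m
      · rw [pil_x, dif_pos (by simp only [Fin.val_succ]; omega)]
        have h1 : (⟨((a.succ : Fin (m+1)) : ℕ), by simp only [Fin.val_succ]; omega⟩ : Fin m) =
            (⟨(a:ℕ)+1, by omega⟩ : Fin m) := by simp [Fin.ext_iff]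
        rw [h1, x_mul_Y]
        exact xym a ⟨(a:ℕ)+1, by omega⟩ (by simp)
      · rw [pil_x, dif_neg (by simp only [Fin.val_succ]; omega), zero_mul]
        rw [yxN a (by have := a.isLt; omega)]
    | y a =>
      rw [LF_y]
      have hRHS : mkP k m (FreeAlgebra.ι k (PGen.y a)) = yP k m a := rfl
      rw [hRHS]
      by_cases ha : (a : ℕ) + 1 < m
      · rw [pil_y, dif_pos (by simp only [Fin.val_succ]; omega)]
        have h1 : (⟨((a.succ : Fin (m+1)) : ℕ), by simp only [Fin.val_succ]; omega⟩ : Fin m) =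
            (⟨(a:ℕ)+1, by omega⟩ : Fin m) := by simp [Fin.ext_iff]
        rw [h1, y_mul_Y ⟨(a:ℕ)+1, by omega⟩ a (by simp), Y_mul_y a ⟨(a:ℕ)+1, by omega⟩ (by simp)]
      · rw [pil_y, dif_neg (by simp only [Fin.val_succ]; omega), zero_mul]
        rw [Y_mul_ylast a (by have := a.isLt; omega)]

end Stmt16
namespace Stmt16

open PGen Polynomial

variable (k : Type) [Field k] (m : ℕ)

lemma HP_tri_d : ∀ z : PiA k (m+1),
    (HP k m z) 1 0 = 0 ∧ (HP k m z) 1 1 = C (pil k m z) := by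
  intro z
  obtain ⟨w, rfl⟩ := RingQuot.mkAlgHom_surjective k (PGen.PRel k (m+1)) z
  induction w using FreeAlgebra.induction with
  | grade0 r =>
    rw [AlgHom.commutes]
    have h1 : (algebraMap k (RingQuot (PGen.PRel k (m+1))) r) =
        algebraMap k (PiA k (m+1)) r := rfl
    rw [h1, AlgHom.commutes, AlgHom.commutes]
    constructor
    · rw [Matrix.algebraMap_matrix_apply, if_neg (by decide)]
    · rw [Matrix.algebraMap_matrix_apply, if_pos rfl, Polynomial.algebraMap_apply]
  | add α β ihα ihβ =>
    erw [map_add, map_add, map_add, Matrix.add_apply, Matrix.add_apply,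
      ihα.1, ihβ.1, ihα.2, ihβ.2]
    exact ⟨by rw [add_zero], by rw [map_add]⟩
  | mul α β ihα ihβ =>
    erw [map_mul, map_mul, map_mul]
    constructor
    · rw [mul_entry, ihα.1, ihβ.1, zero_mul, mul_zero, add_zero]
    · rw [mul_entry, ihα.1, ihβ.2, ihα.2, zero_mul, zero_add, ← map_mul]
  | grade1 g =>
    cases g with
    | e v =>
      show (HP k m (eP k (m+1) v)) 1 0 = 0 ∧ (HP k m (eP k (m+1) v)) 1 1 = _
      rw [HP_e, lit10, lit11]
      exact ⟨rfl, rfl⟩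
    | x a =>
      show (HP k m (xP k (m+1) a)) 1 0 = 0 ∧ (HP k m (xP k (m+1) a)) 1 1 = _
      rw [HP_x, lit10, lit11]
      exact ⟨rfl, rfl⟩
    | y a =>
      show (HP k m (yP k (m+1) a)) 1 0 = 0 ∧ (HP k m (yP k (m+1) a)) 1 1 = _
      rw [HP_y, lit10, lit11]
      exact ⟨rfl, rfl⟩

/-! ### Claim R: the retraction identity on representatives -/

lemma claimR : ∀ ω : FreeAlgebra k (PGen m),
    ((HP k m (LF k m ω)) 0 0).coeff 0 +
      ((HP k m (LF k m ω)) 0 1).coeff 0 * YP k m = mkP k m ω := by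
  intro ω
  induction ω using FreeAlgebra.induction with
  | grade0 r =>
    rw [AlgHom.commutes, AlgHom.commutes, AlgHom.commutes]
    rw [Matrix.algebraMap_matrix_apply, if_pos rfl,
      Matrix.algebraMap_matrix_apply, if_neg (by decide)]
    rw [Polynomial.algebraMap_apply, Polynomial.coeff_C_zero, Polynomial.coeff_zero,
      zero_mul, add_zero]
  | add α β ihα ihβ =>
    rw [map_add, map_add, map_add, Matrix.add_apply, Matrix.add_apply,
      Polynomial.coeff_add, Polynomial.coeff_add, add_mul]
    calc _ = (((HP k m) ((LF k m) α) 0 0).coeff 0 + ((HP k m) ((LF k m) α) 0 1).coeff 0 * YP k m)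
        + (((HP k m) ((LF k m) β) 0 0).coeff 0 + ((HP k m) ((LF k m) β) 0 1).coeff 0 * YP k m) := by
          abel
      _ = _ := by rw [ihα, ihβ]
  | mul α β ihα ihβ =>
    rw [map_mul, map_mul, map_mul, mul_entry, mul_entry]
    rw [(HP_tri_d k m (LF k m β)).1, (HP_tri_d k m (LF k m β)).2]
    rw [mul_zero, add_zero]
    rw [Polynomial.coeff_add, Polynomial.mul_coeff_zero, Polynomial.mul_coeff_zero,
      Polynomial.mul_coeff_zero, Polynomial.coeff_C_zero]
    rw [← ihα, ← ihβ]
    rw [add_mul, mul_assoc (((HP k m) ((LF k m) α) 0 1).coeff 0), claimQ]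
    rw [← ihβ]
    noncomm_ring
  | grade1 g =>
    cases g with
    | e v =>
      rw [LF_e, map_add]
      have hmk : mkP k m (FreeAlgebra.ι k (PGen.e v)) = eP k m v := rfl
      rw [hmk]
      have hsplit : HP k m (if v = 0 then eP k (m+1) 0 else 0) =
          if v = 0 then HP k m (eP k (m+1) 0) else 0 := by
        split <;> simp
      rw [hsplit, HP_e]
      by_cases hv : v = 0
      · rw [if_pos hv, HP_e, Matrix.add_apply, Matrix.add_apply, lit00, lit01, lit00, lit01]
        rw [pir_e0, pir_esucc, map_zero, add_zero]
        simp [hv]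
      · rw [if_neg hv, Matrix.add_apply, Matrix.add_apply, lit00, lit01]
        rw [pir_esucc]
        simp
    | x a =>
      rw [LF_x, HP_x, lit00, lit01, pir_xsucc]
      have hmk : mkP k m (FreeAlgebra.ι k (PGen.x a)) = xP k m a := rfl
      rw [hmk]
      simp
    | y a =>
      rw [LF_y, HP_y, lit00, lit01, pir_ysucc]
      have hmk : mkP k m (FreeAlgebra.ι k (PGen.y a)) = yP k m a := rfl
      rw [hmk]
      rw [Polynomial.coeff_C_mul, Polynomial.coeff_X_zero, mul_zero, zero_add,
        Polynomial.coeff_C_zero, e_mul_Y]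

/-! ### `H(Y)` and the retraction -/

lemma HP_Y : HP k m (YP k (m+1)) = !![C (YP k m) * X, 1; 0, C (YP k m)] := by
  rw [YP, map_sum]
  simp only [HP_y]
  rw [fin2_sum]
  rw [show (∑ j : Fin (m+1), C (pir k m (yP k (m+1) j)) * X) = C (YP k m) * X by
    rw [← Finset.sum_mul, ← map_sum, ← map_sum, ← YP, pir_Y]]
  rw [show (∑ j : Fin (m+1), C (eP k m j)) = 1 by
    rw [← map_sum, sum_e, map_one]]
  rw [show (∑ j : Fin (m+1), C (pil k m (yP k (m+1) j))) = C (YP k m) by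
    rw [← map_sum, ← map_sum, ← YP, pil_Y]]
  rw [show (∑ _j : Fin (m+1), (0 : Pol k m)) = 0 by simp]

/-- The linear retraction `r` with `r ∘ f = id`. -/
noncomputable def rF : PiA k (m+1) → PiA k m := fun z => ((HP k m z) 0 1).coeff 0

lemma rF_fL (u : PiA k m) : rF k m (fL k m u) = u := by
  obtain ⟨ω, rfl⟩ := mkP_surjective u
  rw [fL_mk, rF]
  rw [map_mul, HP_Y, mul_entry]
  rw [lit01, lit11]
  rw [mul_one]
  rw [Polynomial.coeff_add, Polynomial.mul_coeff_zero, Polynomial.coeff_C_zero]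
  exact claimR k m ω

end Stmt16
namespace Stmt16

open PGen

variable (k : Type) [Field k] (m : ℕ)

lemma sg_e (v : Fin (m+2)) : sg k m (eP k (m+1) v) = eP k (m+1) v := by
  rw [eP, sg_mk, sgF_e]; rfl

lemma sg_x (a : Fin (m+1)) : sg k m (xP k (m+1) a) = xP k (m+1) a := by
  rw [xP, sg_mk, sgF_x]; rfl

/-- The ideal generated by the `y` arrows, as a `k`-submodule. -/
noncomputable def J : Submodule k (PiA k (m+1)) :=
  Submodule.span k {p | ∃ (a b : PiA k (m+1)) (j : Fin (m+1)), p = a * yP k (m+1) j * b}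

lemma J_mul_left (c : PiA k (m+1)) {z : PiA k (m+1)} (hz : z ∈ J k m) :
    c * z ∈ J k m := by
  induction hz using Submodule.span_induction with
  | mem p hp =>
    obtain ⟨a, b, j, rfl⟩ := hp
    exact Submodule.subset_span ⟨c * a, b, j, by noncomm_ring⟩
  | zero => rw [mul_zero]; exact zero_mem _
  | add p q _ _ ihp ihq => rw [mul_add]; exact add_mem ihp ihq
  | smul t p _ ihp => rw [mul_smul_comm]; exact Submodule.smul_mem _ t ihp

lemma J_mul_right (c : PiA k (m+1)) {z : PiA k (m+1)} (hz : z ∈ J k m) :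
    z * c ∈ J k m := by
  induction hz using Submodule.span_induction with
  | mem p hp =>
    obtain ⟨a, b, j, rfl⟩ := hp
    exact Submodule.subset_span ⟨a, b * c, j, by noncomm_ring⟩
  | zero => rw [zero_mul]; exact zero_mem _
  | add p q _ _ ihp ihq => rw [add_mul]; exact add_mem ihp ihq
  | smul t p _ ihp => rw [smul_mul_assoc]; exact Submodule.smul_mem _ t ihp

lemma sub_sg_mem_J (z : PiA k (m+1)) : z - sg k m z ∈ J k m := by
  obtain ⟨w, rfl⟩ := RingQuot.mkAlgHom_surjective k (PGen.PRel k (m+1)) z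
  induction w using FreeAlgebra.induction with
  | grade0 r =>
    rw [AlgHom.commutes]
    have h1 : (algebraMap k (RingQuot (PGen.PRel k (m+1))) r) =
        algebraMap k (PiA k (m+1)) r := rfl
    rw [h1, AlgHom.commutes, sub_self]
    exact zero_mem _
  | add α β ihα ihβ =>
    erw [map_add, map_add]
    have key : ∀ p q ps qs : PiA k (m+1), p - ps ∈ J k m → q - qs ∈ J k m →
        (p + q) - (ps + qs) ∈ J k m := by
      intro p q ps qs hp hq
      have h : (p + q) - (ps + qs) = (p - ps) + (q - qs) := by noncomm_ring
      rw [h]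
      exact add_mem hp hq
    exact key _ _ _ _ ihα ihβ
  | mul α β ihα ihβ =>
    erw [map_mul, map_mul]
    have key : ∀ p q ps qs : PiA k (m+1), p - ps ∈ J k m → q - qs ∈ J k m →
        p * q - ps * qs ∈ J k m := by
      intro p q ps qs hp hq
      have h : p * q - ps * qs = p * (q - qs) + (p - ps) * qs := by noncomm_ring
      rw [h]
      exact add_mem (J_mul_left k m p hq) (J_mul_right k m qs hp)
    exact key _ _ _ _ ihα ihβ
  | grade1 g =>
    cases g with
    | e v =>
      show eP k (m+1) v - sg k m (eP k (m+1) v) ∈ J k m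
      rw [sg_e, sub_self]; exact zero_mem _
    | x a =>
      show xP k (m+1) a - sg k m (xP k (m+1) a) ∈ J k m
      rw [sg_x, sub_self]; exact zero_mem _
    | y a =>
      show yP k (m+1) a - sg k m (yP k (m+1) a) ∈ J k m
      rw [sg_y, sub_zero]
      exact Submodule.subset_span ⟨1, 1, a, by rw [one_mul, mul_one]⟩

lemma J_sub_range : ∀ p ∈ J k m, ∃ u : PiA k m, fL k m u = p := by
  intro p hp
  induction hp using Submodule.span_induction with
  | mem p hp =>
    obtain ⟨a, b, j, rfl⟩ := hp
    exact ⟨pir k m a * eP k m j * pil k m b, by rw [fL_bimod, fL_e]⟩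
  | zero => exact ⟨0, map_zero _⟩
  | add p q _ _ ihp ihq =>
    obtain ⟨u, rfl⟩ := ihp
    obtain ⟨u', rfl⟩ := ihq
    exact ⟨u + u', map_add _ _ _⟩
  | smul t p _ ihp =>
    obtain ⟨u, rfl⟩ := ihp
    exact ⟨t • u, map_smul _ _ _⟩

lemma mkY_y (j : Fin (m+1)) :
    RingQuot.mkRingHom (yKill k (m+1)) (yP k (m+1) j) = 0 := by
  have h := RingQuot.mkRingHom_rel (r := yKill k (m+1)) (x := yP k (m+1) j) (y := 0)
    ⟨⟨j, rfl⟩, rfl⟩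
  simpa using h

lemma sg_resp_yKill : ∀ ⦃u v : PiA k (m+1)⦄, yKill k (m+1) u v →
    (sg k m).toRingHom u = (sg k m).toRingHom v := by
  rintro u v ⟨⟨j, rfl⟩, rfl⟩
  show sg k m (yP k (m+1) j) = sg k m 0
  rw [sg_y, map_zero]

lemma sg_of_mk_eq_zero {z : PiA k (m+1)}
    (h : RingQuot.mkRingHom (yKill k (m+1)) z = 0) : sg k m z = 0 := by
  calc sg k m z = (sg k m).toRingHom z := rfl
    _ = RingQuot.lift ⟨(sg k m).toRingHom, sg_resp_yKill k m⟩
          (RingQuot.mkRingHom (yKill k (m+1)) z) :=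
        (RingQuot.lift_mkRingHom_apply ((sg k m).toRingHom) (sg_resp_yKill k m) z).symm
    _ = 0 := by rw [h, map_zero]

lemma mk_fL_eq_zero (u : PiA k m) :
    RingQuot.mkRingHom (yKill k (m+1)) (fL k m u) = 0 := by
  obtain ⟨ω, rfl⟩ := mkP_surjective u
  rw [fL_mk, map_mul]
  have hY : RingQuot.mkRingHom (yKill k (m+1)) (YP k (m+1)) = 0 := by
    rw [YP, map_sum]
    exact Finset.sum_eq_zero fun j _ => mkY_y k m j
  rw [hY, mul_zero]

lemma fL_injective : Function.Injective (fL k m) := by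
  intro u u' h
  have h2 := congrArg (rF k m) h
  rwa [rF_fL, rF_fL] at h2

end Stmt16

/-- For `n = m+2 ≥ 2` there is a short exact sequence of
`Π_n`-`Π_n`-bimodules `0 → Π_{n−1}⟨−1⟩ → Π_n → kA⃗_n → 0`: there are quotient maps
`π^ℓ, π^r : Π_n → Π_{n−1}` (killing the last, resp. first, vertex) and a `k`-linear
embedding `f : Π_{n−1} → Π_n` with `f(e_i) = y_{i+1}`, which is a map of bimodules for
the inflated bimodule structure, and whose image is exactly the kernel of the projection
`Π_n ↠ kA⃗_n` killing the arrows `y`. -/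
theorem stmt_16 (k : Type) [Field k] (m : ℕ) :
    ∃ (πl πr : PiA k (m + 1) →ₐ[k] PiA k m) (f : PiA k m →ₗ[k] PiA k (m + 1)),
      -- `π^r` kills the first vertex and shifts indices down
      πr (eP k (m + 1) 0) = 0 ∧
      (∀ i : Fin (m + 1), πr (eP k (m + 1) i.succ) = eP k m i) ∧
      πr (xP k (m + 1) 0) = 0 ∧
      (∀ i : Fin m, πr (xP k (m + 1) i.succ) = xP k m i) ∧
      πr (yP k (m + 1) 0) = 0 ∧
      (∀ i : Fin m, πr (yP k (m + 1) i.succ) = yP k m i) ∧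
      -- `π^ℓ` kills the last vertex
      (∀ i : Fin (m + 1), πl (eP k (m + 1) i.castSucc) = eP k m i) ∧
      πl (eP k (m + 1) (Fin.last (m + 1))) = 0 ∧
      (∀ i : Fin m, πl (xP k (m + 1) i.castSucc) = xP k m i) ∧
      πl (xP k (m + 1) (Fin.last m)) = 0 ∧
      (∀ i : Fin m, πl (yP k (m + 1) i.castSucc) = yP k m i) ∧
      πl (yP k (m + 1) (Fin.last m)) = 0 ∧
      -- the embedding sends `e_i` to `y_{i+1}` (degree shift `⟨−1⟩`)
      (∀ i : Fin (m + 1), f (eP k m i) = yP k (m + 1) i) ∧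
      -- `f` is a homomorphism for the inflated bimodule structure
      (∀ (a b : PiA k (m + 1)) (u : PiA k m), f (πr a * u * πl b) = a * f u * b) ∧
      -- short exactness
      Function.Injective f ∧
      (∀ z : PiA k (m + 1),
        RingQuot.mkRingHom (yKill k (m + 1)) z = 0 ↔ ∃ u : PiA k m, f u = z) ∧
      Function.Surjective (RingQuot.mkRingHom (yKill k (m + 1))) := by
  
  refine ⟨Stmt16.pil k m, Stmt16.pir k m, Stmt16.fL k m,
    Stmt16.pir_e0 k m, Stmt16.pir_esucc k m, Stmt16.pir_x0 k m, Stmt16.pir_xsucc k m,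
    Stmt16.pir_y0 k m, Stmt16.pir_ysucc k m,
    Stmt16.pil_ecast k m, Stmt16.pil_elast k m, Stmt16.pil_xcast k m, Stmt16.pil_xlast k m,
    Stmt16.pil_ycast k m, Stmt16.pil_ylast k m,
    Stmt16.fL_e k m, Stmt16.fL_bimod k m, Stmt16.fL_injective k m, ?_,
    RingQuot.mkRingHom_surjective _⟩
  intro z
  constructor
  · intro hz
    have hJ : z ∈ Stmt16.J k m := by
      have := Stmt16.sub_sg_mem_J k m z
      rwa [Stmt16.sg_of_mk_eq_zero k m hz, sub_zero] at this
    exact Stmt16.J_sub_range k m z hJ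
  · rintro ⟨u, rfl⟩
    exact Stmt16.mk_fL_eq_zero k m u
end
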